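/- arXiv:2207.09340 — 8 statements merged into one kernel-verified Lean document; each statement's English description precedes it below -/
import Mathlib

section
/- Let U ∈ ℂ^{n×n} be a unitary matrix and let T ⊆ ℂ^n be any k-dimensional complex linear subspace (1 ≤ k ≤ n). Then the coherence of T with respect to ‖·‖_U satisfies sup{ ‖Uv‖_∞ : v ∈ T, ‖v‖₂ = 1 } ≥ √(k/n). -/
open scoped Matrix ComplexConjugate

/-- The Euclidean (ℓ²) norm of a finite complex vector. -/
noncomputable def l2C {n : ℕ} (x : Fin n → ℂ) : ℝ := Real.sqrt (∑ i, ‖x i‖ ^ 2)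

/-- The ℓ^∞ norm of a finite complex vector. -/
noncomputable def linfC {n : ℕ} (x : Fin n → ℂ) : ℝ := ⨆ i, ‖x i‖

lemma sum_sq_eq_star_dot {n : ℕ} (x : Fin n → ℂ) :
    ((∑ i, ‖x i‖^2 : ℝ) : ℂ) = dotProduct (star x) x := by
  simp [dotProduct, Complex.conj_mul', Complex.normSq_eq_norm_sq]

lemma mulVec_isometry {n : ℕ} (U : Matrix (Fin n) (Fin n) ℂ) (hU : Uᴴ * U = 1)
    (x : Fin n → ℂ) : ∑ i, ‖U.mulVec x i‖^2 = ∑ i, ‖x i‖^2 := by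
  have h : ((∑ i, ‖U.mulVec x i‖^2 : ℝ) : ℂ) = ((∑ i, ‖x i‖^2 : ℝ) : ℂ) := by
    rw [sum_sq_eq_star_dot, sum_sq_eq_star_dot, Matrix.star_mulVec,
      Matrix.dotProduct_mulVec, Matrix.vecMul_vecMul, hU, Matrix.vecMul_one]
  exact_mod_cast h

lemma l2C_eq_norm {n : ℕ} (x : EuclideanSpace ℂ (Fin n)) : l2C x = ‖x‖ := by
  rw [EuclideanSpace.norm_eq]; rfl

lemma sum_sq_eq_normsq {n : ℕ} (x : EuclideanSpace ℂ (Fin n)) :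
    ∑ i, ‖x i‖^2 = ‖x‖^2 := by
  rw [← l2C_eq_norm, l2C, Real.sq_sqrt (by positivity)]

lemma linfC_le_one {n : ℕ} (hn : 1 ≤ n) (U : Matrix (Fin n) (Fin n) ℂ) (hU : Uᴴ * U = 1)
    (x : Fin n → ℂ) (hx : l2C x = 1) : linfC (U.mulVec x) ≤ 1 := by
  haveI : Nonempty (Fin n) := ⟨⟨0, hn⟩⟩
  unfold linfC
  refine ciSup_le (fun j => ?_)
  have h1 : ‖U.mulVec x j‖^2 ≤ ∑ m, ‖U.mulVec x m‖^2 :=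
    Finset.single_le_sum (f := fun m => ‖U.mulVec x m‖^2) (fun m _ => by positivity)
      (Finset.mem_univ j)
  have h2 : ∑ m, ‖x m‖^2 = 1 := by
    have hx' : Real.sqrt (∑ m, ‖x m‖^2) = 1 := hx
    exact Real.sqrt_eq_one.mp hx'
  rw [mulVec_isometry U hU, h2] at h1
  nlinarith [norm_nonneg (U.mulVec x j)]

set_option maxHeartbeats 1000000 in
/-- for a unitary `U ∈ ℂ^{n×n}` and any `k`-dimensional complex subspace
`T ⊆ ℂ^n` (with `1 ≤ k ≤ n`), the coherence of `T` with respect to `‖·‖_U`, i.e.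
`sup { ‖Uv‖_∞ : v ∈ T, ‖v‖₂ = 1 }`, is at least `√(k/n)`. -/
theorem coherence_lower_bound (n k : ℕ) (hk : 1 ≤ k) (hkn : k ≤ n)
    (U : Matrix (Fin n) (Fin n) ℂ) (hU : Uᴴ * U = 1)
    (T : Submodule ℂ (Fin n → ℂ)) (hT : Module.finrank ℂ T = k) :
    Real.sqrt ((k : ℝ) / n) ≤
      ⨆ v : {v : Fin n → ℂ // v ∈ T ∧ l2C v = 1}, linfC (U.mulVec v.1) := by
  have hn : 1 ≤ n := le_trans hk hkn
  haveI : Nonempty (Fin n) := ⟨⟨0, hn⟩⟩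
  have hn0 : (0:ℝ) < n := by exact_mod_cast hn
  have hk0 : (0:ℝ) < k := by exact_mod_cast hk
  set T' : Submodule ℂ (EuclideanSpace ℂ (Fin n)) :=
    T.map ((WithLp.linearEquiv 2 ℂ (Fin n → ℂ)).symm : (Fin n → ℂ) →ₗ[ℂ] EuclideanSpace ℂ (Fin n)) with hT'def
  have hT' : Module.finrank ℂ T' = k := by rw [hT'def, LinearEquiv.finrank_map_eq]; exact hT
  let b : OrthonormalBasis (Fin k) ℂ T' :=
    (stdOrthonormalBasis ℂ T').reindex (finCongr hT')
  have hborth : Orthonormal ℂ (fun j => ((b j : T') : EuclideanSpace ℂ (Fin n))) :=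
    b.orthonormal.comp_linearIsometry T'.subtypeₗᵢ
  -- conjugated rows of U
  set u : Fin n → EuclideanSpace ℂ (Fin n) :=
    fun i => (WithLp.equiv 2 (Fin n → ℂ)).symm (star (U i)) with hu
  have hinner : ∀ (x : EuclideanSpace ℂ (Fin n)) (i : Fin n),
      (inner ℂ (u i) x : ℂ) = U.mulVec x i := by
    intro x i
    rw [hu, PiLp.inner_apply, Matrix.mulVec, dotProduct]
    refine Finset.sum_congr rfl fun j _ => ?_
    beta_reduce
    rw [RCLike.inner_apply', WithLp.equiv_symm_apply, WithLp.ofLp_toLp, Pi.star_apply, starRingEnd_apply,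
      star_star]
  set s : Fin n → ℝ :=
    fun i => ∑ j, ‖(inner ℂ ((b j : EuclideanSpace ℂ (Fin n))) (u i) : ℂ)‖^2 with hs
  have hsum : ∑ i, s i = k := by
    simp only [hs]
    rw [Finset.sum_comm]
    have hrow : ∀ j : Fin k,
        ∑ i, ‖(inner ℂ ((b j : EuclideanSpace ℂ (Fin n))) (u i) : ℂ)‖^2 = 1 := by
      intro j
      have h1 : ∀ i, ‖(inner ℂ ((b j : EuclideanSpace ℂ (Fin n))) (u i) : ℂ)‖
          = ‖U.mulVec ((b j : EuclideanSpace ℂ (Fin n))) i‖ := by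
        intro i
        rw [norm_inner_symm, hinner]
      simp_rw [h1]
      rw [mulVec_isometry U hU, sum_sq_eq_normsq]
      have := hborth.1 j
      rw [this]; norm_num
    simp_rw [hrow]
    simp
  have hex : ∃ i, (k:ℝ)/n ≤ s i := by
    by_contra h
    push_neg at h
    have hlt : ∑ i, s i < ∑ _i : Fin n, (k:ℝ)/n :=
      Finset.sum_lt_sum_of_nonempty ⟨⟨0, hn⟩, Finset.mem_univ _⟩ (fun i _ => h i)
    rw [hsum, Finset.sum_const, Finset.card_univ, Fintype.card_fin, nsmul_eq_mul,
      mul_div_cancel₀ _ (ne_of_gt hn0)] at hlt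
    exact lt_irrefl _ hlt
  obtain ⟨i, hi⟩ := hex
  have hsipos : 0 < s i := lt_of_lt_of_le (by positivity) hi
  set v : EuclideanSpace ℂ (Fin n) :=
    ∑ j, (inner ℂ ((b j : EuclideanSpace ℂ (Fin n))) (u i) : ℂ) • ((b j : T') : EuclideanSpace ℂ (Fin n)) with hv
  have hvT : WithLp.ofLp v ∈ T := by
    rw [hv, WithLp.ofLp_sum]
    exact Submodule.sum_mem T (fun j _ => by
      rw [WithLp.ofLp_smul]
      exact Submodule.smul_mem T _ (by
        obtain ⟨y, hy, hy'⟩ := (b j).2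
        rw [← hy']
        simpa using hy))
  have hterm : ∀ j : Fin k,
      (starRingEnd ℂ) (inner ℂ ((b j : EuclideanSpace ℂ (Fin n))) (u i) : ℂ)
        * (inner ℂ ((b j : EuclideanSpace ℂ (Fin n))) (u i) : ℂ)
      = ((‖(inner ℂ ((b j : EuclideanSpace ℂ (Fin n))) (u i) : ℂ)‖ : ℂ))^2 := by
    intro j
    rw [Complex.conj_mul']
  have hinner_v : (inner ℂ (u i) v : ℂ) = ((s i : ℝ) : ℂ) := by
    rw [hv, inner_sum]
    simp only [hs]
    push_cast
    refine Finset.sum_congr rfl fun j _ => ?_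
    rw [inner_smul_right, ← inner_conj_symm (u i) ((b j : T') : EuclideanSpace ℂ (Fin n)),
      mul_comm, hterm j]
  have hnormv : ‖v‖^2 = s i := by
    have h2 : (inner ℂ v v : ℂ) = ((s i : ℝ) : ℂ) := by
      rw [hv, hborth.inner_sum]
      simp only [hs]
      push_cast
      exact Finset.sum_congr rfl fun j _ => hterm j
    have h3 : (inner ℂ v v : ℂ) = (‖v‖^2 : ℝ) := by
      rw [inner_self_eq_norm_sq_to_K]; norm_cast
    rw [h3] at h2
    exact_mod_cast h2
  set r : ℝ := Real.sqrt (s i) with hrdef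
  have hr2 : r^2 = s i := Real.sq_sqrt (le_of_lt hsipos)
  have hrpos : 0 < r := Real.sqrt_pos.mpr hsipos
  have hnv : ‖v‖ = r := by
    rw [← Real.sqrt_sq (norm_nonneg v), hnormv]
  set v' : EuclideanSpace ℂ (Fin n) := ((r:ℂ))⁻¹ • v with hv'
  have hv'T : WithLp.ofLp v' ∈ T := Submodule.smul_mem T _ hvT
  have hl2v' : l2C v' = 1 := by
    rw [l2C_eq_norm, hv', norm_smul, hnv]
    simp [norm_inv, Complex.norm_real, abs_of_pos hrpos]
    field_simp
  have hUv' : ‖U.mulVec v' i‖ = r := by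
    rw [← hinner v' i, hv', inner_smul_right, hinner_v]
    rw [norm_mul]
    simp [Complex.norm_real, abs_of_pos hrpos, abs_of_pos hsipos]
    rw [← hr2]
    field_simp
  have hbdd : BddAbove (Set.range fun v : {v : Fin n → ℂ // v ∈ T ∧ l2C v = 1} =>
      linfC (U.mulVec v.1)) := by
    refine ⟨1, ?_⟩
    rintro _ ⟨⟨x, hxT, hx⟩, rfl⟩
    exact linfC_le_one hn U hU x hx
  have hmain : Real.sqrt ((k:ℝ)/n) ≤ linfC (U.mulVec v') := by
    calc Real.sqrt ((k:ℝ)/n) ≤ r := Real.sqrt_le_sqrt hi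
    _ = ‖U.mulVec v' i‖ := hUv'.symm
    _ ≤ linfC (U.mulVec v') := by
        unfold linfC
        exact le_ciSup (f := fun m => ‖U.mulVec v' m‖)
          (Set.Finite.bddAbove (Set.finite_range _)) i
  exact le_trans hmain (le_ciSup hbdd ⟨v', hv'T, hl2v'⟩)
end

section
/- Let n ≥ k ≥ 1 and let F ∈ ℂ^{n×n} be the discrete Fourier transform matrix, F_{jl} = (1/√n)·exp(2πi(j−1)(l−1)/n). Let T ⊆ ℂ^n be the span of the first k columns of F. Then sup{ ‖v‖_∞ : v ∈ T, ‖v‖₂ = 1 } = √(k/n); in particular the lower bound √(k/n) on the coherence of k-dimensional subspaces with respect to ‖·‖_I is attained. -/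
set_option maxHeartbeats 1000000

open Finset Complex


/-- The discrete Fourier transform matrix `F_{jl} = n^{-1/2} exp(2πi·j·l/n)`
(0-based indices, equivalent to the 1-based `(j−1)(l−1)` convention). -/
noncomputable def dftMatrix (n : ℕ) : Matrix (Fin n) (Fin n) ℂ :=
  fun j l => ((1 / Real.sqrt n : ℝ) : ℂ) *
    Complex.exp (2 * (Real.pi : ℂ) * Complex.I * (j.val : ℂ) * (l.val : ℂ) / (n : ℂ))

lemma dft_norm (n : ℕ) (j l : Fin n) : ‖dftMatrix n j l‖ = 1 / Real.sqrt n := by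
  have h : (2 * (Real.pi : ℂ) * Complex.I * (j.val : ℂ) * (l.val : ℂ) / (n : ℂ))
      = ((2 * Real.pi * j.val * l.val / n : ℝ) : ℂ) * Complex.I := by
    push_cast; ring
  rw [dftMatrix, h, norm_mul, Complex.norm_exp_ofReal_mul_I, mul_one,
    Complex.norm_real, Real.norm_eq_abs, _root_.abs_of_nonneg (by positivity)]

lemma dft_ortho (n : ℕ) (hn : 0 < n) (a b : Fin n) :
    ∑ j : Fin n, (starRingEnd ℂ) (dftMatrix n j a) * dftMatrix n j b =
      if a = b then 1 else 0 := by
  have hnC : (n : ℂ) ≠ 0 := Nat.cast_ne_zero.mpr hn.ne'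
  have hsq : ((1 / Real.sqrt n : ℝ) : ℂ) * ((1 / Real.sqrt n : ℝ) : ℂ) = 1 / (n : ℂ) := by
    rw [← Complex.ofReal_mul, div_mul_div_comm, one_mul,
      Real.mul_self_sqrt (Nat.cast_nonneg n)]
    push_cast; ring
  set ζ : ℂ := Complex.exp (2 * (Real.pi : ℂ) * Complex.I * ((b.val : ℂ) - (a.val : ℂ)) / (n : ℂ)) with hζ
  have hterm : ∀ j : Fin n, (starRingEnd ℂ) (dftMatrix n j a) * dftMatrix n j b
      = (1 / (n : ℂ)) * ζ ^ (j : ℕ) := by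
    intro j
    have hc : (starRingEnd ℂ) (2 * (Real.pi : ℂ) * Complex.I * (j.val : ℂ) * (a.val : ℂ) / (n : ℂ))
        = -(2 * (Real.pi : ℂ) * Complex.I * (j.val : ℂ) * (a.val : ℂ) / (n : ℂ)) := by
      simp only [map_div₀, map_mul, Complex.conj_I, Complex.conj_ofReal, map_ofNat,
        Complex.conj_natCast]
      ring
    simp only [dftMatrix]
    rw [map_mul, ← Complex.exp_conj, hc, Complex.conj_ofReal, hζ, ← Complex.exp_nat_mul,
      mul_mul_mul_comm, hsq, ← Complex.exp_add]
    congr 1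
    ring
  rw [Finset.sum_congr rfl (fun j _ => hterm j), ← Finset.mul_sum,
    Fin.sum_univ_eq_sum_range (fun i => ζ ^ i) n]
  by_cases hab : a = b
  · subst hab
    simp only [sub_self, mul_zero, zero_div, Complex.exp_zero] at hζ
    simp [hζ, Finset.sum_const, one_div, inv_mul_cancel₀ hnC]
  · have h2πI : (2 * (Real.pi : ℂ) * Complex.I) ≠ 0 := by
      simp [Real.pi_ne_zero, Complex.I_ne_zero]
    have hne : ζ ≠ 1 := by
      intro h1
      rw [hζ, Complex.exp_eq_one_iff] at h1
      obtain ⟨m, hm⟩ := h1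
      have hC : ((b.val : ℂ) - (a.val : ℂ)) = m * n := by
        field_simp at hm
        apply mul_left_cancel₀ h2πI
        linear_combination (2 * (Real.pi : ℂ) * Complex.I) * hm
      have hZ : ((b.val : ℤ) - (a.val : ℤ)) = m * n := by exact_mod_cast hC
      have hlt : ((b.val : ℤ) - a.val) ≠ 0 := by
        simp only [sub_ne_zero]
        exact_mod_cast fun h => hab (Fin.ext (by exact_mod_cast h.symm))
      have habs : |(b.val : ℤ) - a.val| < n :=
        abs_sub_lt_iff.mpr ⟨by have := b.isLt; omega, by have := a.isLt; omega⟩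
      rw [hZ] at hlt habs
      have hm0 : m ≠ 0 := fun h => hlt (by rw [h]; ring)
      have hge : (n : ℤ) ≤ |m * n| := by
        rw [abs_mul, abs_of_nonneg (by positivity : (0:ℤ) ≤ (n:ℤ))]
        nlinarith [Int.one_le_abs hm0, (by exact_mod_cast hn : (0:ℤ) < n)]
      exact absurd (lt_of_le_of_lt hge habs) (lt_irrefl _)
    have hpow : ζ ^ n = 1 := by
      rw [hζ, ← Complex.exp_nat_mul]
      have h1 : (n : ℂ) * (2 * (Real.pi : ℂ) * Complex.I * ((b.val : ℂ) - (a.val : ℂ)) / (n : ℂ))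
          = (((b.val : ℤ) - (a.val : ℤ) : ℤ) : ℂ) * (2 * Real.pi * Complex.I) := by
        push_cast; field_simp
      rw [h1, Complex.exp_int_mul_two_pi_mul_I]
    rw [geom_sum_eq hne, hpow]
    simp [hab]

lemma dft_col_ortho {n k : ℕ} (hn : 0 < n) (hkn : k ≤ n) (a b : Fin k) :
    ∑ j : Fin n, (starRingEnd ℂ) (dftMatrix n j (Fin.castLE hkn a)) *
      dftMatrix n j (Fin.castLE hkn b) = if a = b then 1 else 0 := by
  rw [dft_ortho n hn]
  simp [Fin.castLE_inj]

lemma l2_sum {n k : ℕ} (hn : 0 < n) (hkn : k ≤ n) (c : Fin k → ℂ) :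
    ∑ j : Fin n, ‖∑ l, c l * dftMatrix n j (Fin.castLE hkn l)‖ ^ 2 = ∑ l, ‖c l‖ ^ 2 := by
  set u : Fin k → Fin n → ℂ := fun l j => dftMatrix n j (Fin.castLE hkn l) with hu
  have hz : ∀ z : ℂ, ‖z‖ ^ 2 = ((starRingEnd ℂ) z * z).re := by
    intro z
    rw [mul_comm, Complex.mul_conj]
    simp [Complex.sq_norm]
  have key : ∑ j : Fin n, (starRingEnd ℂ) (∑ l, c l * u l j) * (∑ l, c l * u l j)
      = ∑ l, (starRingEnd ℂ) (c l) * c l := by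
    have step : ∀ j : Fin n, (starRingEnd ℂ) (∑ l, c l * u l j) * (∑ l, c l * u l j)
        = ∑ a, ∑ b, ((starRingEnd ℂ) (c a) * c b) *
            ((starRingEnd ℂ) (u a j) * u b j) := by
      intro j
      rw [map_sum, Finset.sum_mul_sum]
      refine Finset.sum_congr rfl fun a _ => Finset.sum_congr rfl fun b _ => ?_
      rw [map_mul]; ring
    rw [Finset.sum_congr rfl fun j _ => step j, Finset.sum_comm]
    refine Finset.sum_congr rfl fun a _ => ?_
    rw [Finset.sum_comm]
    have : ∀ b : Fin k, ∑ j : Fin n, ((starRingEnd ℂ) (c a) * c b) *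
        ((starRingEnd ℂ) (u a j) * u b j)
        = ((starRingEnd ℂ) (c a) * c b) * (if a = b then 1 else 0) := by
      intro b
      rw [← Finset.mul_sum, hu]
      simp only
      rw [dft_col_ortho hn hkn]
    rw [Finset.sum_congr rfl fun b _ => this b]
    simp
  calc ∑ j : Fin n, ‖∑ l, c l * u l j‖ ^ 2
      = ∑ j : Fin n, ((starRingEnd ℂ) (∑ l, c l * u l j) * (∑ l, c l * u l j)).re := by
        exact Finset.sum_congr rfl fun j _ => hz _
    _ = (∑ j : Fin n, (starRingEnd ℂ) (∑ l, c l * u l j) * (∑ l, c l * u l j)).re := by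
        rw [Complex.re_sum]
    _ = (∑ l, (starRingEnd ℂ) (c l) * c l).re := by rw [key]
    _ = ∑ l, ‖c l‖ ^ 2 := by
        rw [Complex.re_sum]
        exact Finset.sum_congr rfl fun l _ => (hz _).symm

/-- the span `T` of the first `k` columns of the DFT matrix satisfies
`sup { ‖v‖_∞ : v ∈ T, ‖v‖₂ = 1 } = √(k/n)`; in particular the coherence lower bound
`√(k/n)` for `k`-dimensional subspaces (w.r.t. `‖·‖_I`) is attained. -/
theorem dft_span_coherence_attained (n k : ℕ) (hk : 1 ≤ k) (hkn : k ≤ n)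
    (T : Submodule ℂ (Fin n → ℂ))
    (hT : T = Submodule.span ℂ
      {v : Fin n → ℂ | ∃ l : Fin n, (l : ℕ) < k ∧ v = fun j => dftMatrix n j l}) :
    (⨆ v : {v : Fin n → ℂ // v ∈ T ∧ l2C v = 1}, linfC v.1) = Real.sqrt ((k : ℝ) / n) := by
  have hn : 0 < n := lt_of_lt_of_le hk hkn
  have hk0 : 0 < k := hk
  have hnR : (0:ℝ) < n := by exact_mod_cast hn
  have hkR : (0:ℝ) < k := by exact_mod_cast hk0
  set u : Fin k → (Fin n → ℂ) := fun l j => dftMatrix n j (Fin.castLE hkn l) with hu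
  -- membership characterization
  have hset : {v : Fin n → ℂ | ∃ l : Fin n, (l : ℕ) < k ∧ v = fun j => dftMatrix n j l}
      = Set.range u := by
    ext v
    constructor
    · rintro ⟨l, hl, rfl⟩
      exact ⟨⟨l.val, hl⟩, rfl⟩
    · rintro ⟨l, rfl⟩
      exact ⟨Fin.castLE hkn l, l.isLt, rfl⟩
  have hmem : ∀ v : Fin n → ℂ, v ∈ T ↔ ∃ c : Fin k → ℂ, ∑ l, c l • u l = v := by
    intro v
    rw [hT, hset]
    exact Submodule.mem_span_range_iff_exists_fun ℂ
  -- pointwise evaluation of combinations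
  have heval : ∀ (c : Fin k → ℂ) (j : Fin n), (∑ l, c l • u l) j = ∑ l, c l * u l j := by
    intro c j
    simp [Finset.sum_apply]
  -- the bound for unit vectors
  have hbound : ∀ v : Fin n → ℂ, v ∈ T → l2C v = 1 → ∀ j, ‖v j‖ ≤ Real.sqrt ((k:ℝ)/n) := by
    intro v hv hl2 j
    obtain ⟨c, hc⟩ := (hmem v).mp hv
    have hsum2 : ∑ l, ‖c l‖ ^ 2 = 1 := by
      have h1 : ∑ j : Fin n, ‖v j‖ ^ 2 = 1 := Real.sqrt_eq_one.mp hl2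
      rw [← l2_sum hn hkn c, ← h1]
      exact Finset.sum_congr rfl fun j _ => by rw [← hc, heval]
    have hCS : (∑ l, ‖c l‖) ^ 2 ≤ (k:ℝ) := by
      have := sq_sum_le_card_mul_sum_sq (s := Finset.univ) (f := fun l : Fin k => ‖c l‖)
      simpa only [Finset.card_univ, Fintype.card_fin, hsum2, mul_one] using this
    have hsumle : ∑ l, ‖c l‖ ≤ Real.sqrt k := by
      have h0 : (0:ℝ) ≤ ∑ l, ‖c l‖ := by positivity
      nlinarith [Real.sq_sqrt hkR.le, Real.sqrt_nonneg (k:ℝ)]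
    have hvj : ‖v j‖ ≤ (∑ l, ‖c l‖) / Real.sqrt n := by
      rw [← hc, heval]
      calc ‖∑ l, c l * u l j‖ ≤ ∑ l, ‖c l * u l j‖ := norm_sum_le _ _
        _ = ∑ l, ‖c l‖ * (1 / Real.sqrt n) := by
            refine Finset.sum_congr rfl fun l _ => ?_
            rw [norm_mul, hu]
            simp only
            rw [dft_norm]
        _ = (∑ l, ‖c l‖) / Real.sqrt n := by rw [← Finset.sum_mul]; ring
    calc ‖v j‖ ≤ (∑ l, ‖c l‖) / Real.sqrt n := hvj
      _ ≤ Real.sqrt k / Real.sqrt n := by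
          exact div_le_div_of_nonneg_right hsumle (Real.sqrt_nonneg _)
      _ = Real.sqrt ((k:ℝ)/n) := (Real.sqrt_div hkR.le _).symm
  haveI : Nonempty (Fin n) := ⟨⟨0, hn⟩⟩
  have hsk : Real.sqrt k ≠ 0 := (Real.sqrt_pos.mpr hkR).ne'
  have hsn : Real.sqrt n ≠ 0 := (Real.sqrt_pos.mpr hnR).ne'
  set c₀ : Fin k → ℂ := fun _ => (((Real.sqrt k)⁻¹ : ℝ) : ℂ) with hc₀
  set w : Fin n → ℂ := ∑ l, c₀ l • u l with hw
  have hwT : w ∈ T := (hmem w).mpr ⟨c₀, rfl⟩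
  have hw2 : l2C w = 1 := by
    rw [l2C]
    have hj : ∀ j : Fin n, ‖w j‖ ^ 2 = ‖∑ l, c₀ l * dftMatrix n j (Fin.castLE hkn l)‖ ^ 2 := by
      intro j
      rw [hw, heval]
    rw [Finset.sum_congr rfl fun j _ => hj j, l2_sum hn hkn c₀]
    have : ∀ l : Fin k, ‖c₀ l‖ ^ 2 = ((k:ℝ))⁻¹ := by
      intro l
      rw [hc₀]
      rw [Complex.norm_real, Real.norm_eq_abs, _root_.abs_of_nonneg (by positivity),
        ← Real.sqrt_inv, Real.sq_sqrt (by positivity)]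
    rw [Finset.sum_congr rfl fun l _ => this l]
    simp [mul_inv_cancel₀ hkR.ne']
  set j0 : Fin n := ⟨0, hn⟩ with hj0
  have hwj0 : ‖w j0‖ = Real.sqrt ((k:ℝ)/n) := by
    have hu0 : ∀ l : Fin k, u l j0 = ((1 / Real.sqrt n : ℝ) : ℂ) := by
      intro l
      show dftMatrix n j0 (Fin.castLE hkn l) = _
      rw [dftMatrix]
      norm_num [hj0]
    have hwj : w j0 = (k : ℂ) * ((((Real.sqrt k)⁻¹ : ℝ) : ℂ) * ((1 / Real.sqrt n : ℝ) : ℂ)) := by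
      rw [hw, heval]
      simp only [hc₀, hu0]
      rw [Finset.sum_const, Finset.card_univ, Fintype.card_fin, nsmul_eq_mul]
    rw [hwj, norm_mul, norm_mul]
    simp only [Complex.norm_natCast, Complex.norm_real, Real.norm_eq_abs]
    rw [_root_.abs_of_nonneg (by positivity), _root_.abs_of_nonneg (by positivity),
      Real.sqrt_div hkR.le]
    have hkk : (k:ℝ) = Real.sqrt k * Real.sqrt k := (Real.mul_self_sqrt hkR.le).symm
    field_simp
    linear_combination hkk
  have hwinf : linfC w = Real.sqrt ((k:ℝ)/n) := by
    simp only [linfC]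
    apply le_antisymm
    · exact ciSup_le fun j => hbound w hwT hw2 j
    · rw [← hwj0]
      exact le_ciSup (f := fun j : Fin n => ‖w j‖) (Set.Finite.bddAbove (Set.finite_range _)) j0
  have hbdd : BddAbove (Set.range fun v : {v : Fin n → ℂ // v ∈ T ∧ l2C v = 1} => linfC v.1) := by
    refine ⟨Real.sqrt ((k:ℝ)/n), ?_⟩
    rintro x ⟨v, rfl⟩
    simp only [linfC]
    exact ciSup_le fun j => hbound v.1 v.2.1 v.2.2 j
  haveI hne : Nonempty {v : Fin n → ℂ // v ∈ T ∧ l2C v = 1} := ⟨⟨w, hwT, hw2⟩⟩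
  apply le_antisymm
  · refine ciSup_le fun v => ?_
    simp only [linfC]
    exact ciSup_le fun j => hbound v.1 v.2.1 v.2.2 j
  · rw [← hwinf]
    exact le_ciSup hbdd (⟨w, hwT, hw2⟩ : {v : Fin n → ℂ // v ∈ T ∧ l2C v = 1})
end

section
/- Let G : ℝ^k → ℝ^n be a (k,d,n)-generative ReLU network with layer widths k = k_0 ≤ k_1,…,k_d, k_d = n. Then range(G) is a union of at most N polyhedral cones, each contained in a linear subspace of dimension at most k, where N := Π_{ℓ=1}^{d−1} 2^k·(e·k_ℓ/k)^k = (2e·k̄/k)^{k(d−1)} with k̄ := (Π_{ℓ=1}^{d−1} k_ℓ)^{1/(d−1)} the geometric mean of the hidden layer widths. In particular log N ≤ k·Σ_{i=1}^{d−1} log(2e·k_i/k). -/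
/-- The hidden layers of a ReLU network: `hid k W j z = σ(W^{(j)} ⋯ σ(W^{(1)} z))`,
where `σ = max(·,0)` acts entrywise. -/
noncomputable def hid (k : ℕ → ℕ) (W : ∀ i : ℕ, Matrix (Fin (k (i + 1))) (Fin (k i)) ℝ) :
    (j : ℕ) → (Fin (k 0) → ℝ) → Fin (k j) → ℝ
  | 0, z => z
  | (j + 1), z => fun t => max (Matrix.mulVec (W j) (hid k W j z) t) 0

/-- A `(k 0, d+1, k (d+1))`-generative ReLU network:
`genNet k W d z = W^{(d+1)} σ(W^{(d)} ⋯ σ(W^{(1)} z))` (so the paper's depth is `d+1`,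
with hidden widths `k 1, …, k d` and output width `k (d+1)`). -/
noncomputable def genNet (k : ℕ → ℕ) (W : ∀ i : ℕ, Matrix (Fin (k (i + 1))) (Fin (k i)) ℝ)
    (d : ℕ) (z : Fin (k 0) → ℝ) : Fin (k (d + 1)) → ℝ :=
  Matrix.mulVec (W d) (hid k W d z)

/-- A polyhedral cone: the set of conic (nonnegative) combinations of finitely many vectors. -/
def IsPolyhedralCone {n : ℕ} (C : Set (Fin n → ℝ)) : Prop :=
  ∃ (N : ℕ) (v : Fin N → Fin n → ℝ),
    C = {x | ∃ c : Fin N → ℝ, (∀ i, 0 ≤ c i) ∧ x = ∑ i, c i • v i}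


open Finset Matrix

variable {V : Type*} [AddCommGroup V] [Module ℝ V]

/-- conic hull of a finite family -/
def vcone {ι : Type*} [Fintype ι] (v : ι → V) : Set V :=
  {x | ∃ c : ι → ℝ, (∀ i, 0 ≤ c i) ∧ x = ∑ i, c i • v i}

lemma mem_vcone_gen {ι : Type*} [Fintype ι] [DecidableEq ι] (v : ι → V) (i : ι) :
    v i ∈ vcone v := by
  refine ⟨fun j => if j = i then 1 else 0, fun j => by positivity, ?_⟩
  simp [ite_smul]

lemma vcone_zero_mem {ι : Type*} [Fintype ι] (v : ι → V) : (0 : V) ∈ vcone v :=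
  ⟨0, fun _ => le_rfl, by simp⟩

lemma vcone_add {ι : Type*} [Fintype ι] {v : ι → V} {x y : V}
    (hx : x ∈ vcone v) (hy : y ∈ vcone v) : x + y ∈ vcone v := by
  obtain ⟨c, hc, rfl⟩ := hx; obtain ⟨c', hc', rfl⟩ := hy
  exact ⟨c + c', fun i => add_nonneg (hc i) (hc' i), by simp [add_smul, Finset.sum_add_distrib]⟩

lemma vcone_smul {ι : Type*} [Fintype ι] {v : ι → V} {x : V} {t : ℝ}
    (ht : 0 ≤ t) (hx : x ∈ vcone v) : t • x ∈ vcone v := by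
  obtain ⟨c, hc, rfl⟩ := hx
  exact ⟨t • c, fun i => mul_nonneg ht (hc i), by simp [Finset.smul_sum, smul_smul]⟩

lemma vcone_subset {ι κ : Type*} [Fintype ι] [Fintype κ] {v : ι → V} {w : κ → V}
    (h : ∀ j, w j ∈ vcone v) : vcone w ⊆ vcone v := by
  rintro x ⟨c, hc, rfl⟩
  exact Finset.sum_induction _ (· ∈ vcone v) (fun _ _ => vcone_add) (vcone_zero_mem v)
    (fun j _ => vcone_smul (hc j) (h j))

lemma vcone_inter_halfspace {ι : Type} [Fintype ι] (v : ι → V) (f : V →ₗ[ℝ] ℝ) :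
    ∃ (κ : Type) (_ : Fintype κ) (w : κ → V),
      vcone v ∩ {x | 0 ≤ f x} = vcone w := by
  classical
  set pos : ι → ℝ := fun i => if 0 < f (v i) then 1 else 0 with hpos
  set neg : ι → ℝ := fun i => if f (v i) < 0 then 1 else 0 with hneg
  set nn : ι → ℝ := fun i => if 0 ≤ f (v i) then 1 else 0 with hnn
  refine ⟨ι ⊕ ι × ι, inferInstance,
    Sum.elim (fun i => nn i • v i)
      (fun pq => (pos pq.1 * neg pq.2) •
        (f (v pq.1) • v pq.2 + (-f (v pq.2)) • v pq.1)), ?_⟩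
  set w : ι ⊕ ι × ι → V := Sum.elim (fun i => nn i • v i)
      (fun pq => (pos pq.1 * neg pq.2) •
        (f (v pq.1) • v pq.2 + (-f (v pq.2)) • v pq.1)) with hw
  apply Set.Subset.antisymm
  · -- hard direction
    rintro x ⟨⟨c, hc, rfl⟩, hfx⟩
    set a : ι → ℝ := fun i => pos i * (c i * f (v i)) with ha
    set b : ι → ℝ := fun i => neg i * (c i * (-(f (v i)))) with hb
    set A := ∑ i, a i with hA
    set B := ∑ i, b i with hB
    have hb0 : ∀ i, 0 ≤ b i := by
      intro i; rw [hb]; dsimp only; rw [hneg]; dsimp only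
      split_ifs with h
      · have := hc i; nlinarith
      · simp
    have ha0 : ∀ i, 0 ≤ a i := by
      intro i; rw [ha]; dsimp only; rw [hpos]; dsimp only
      split_ifs with h
      · have := hc i; nlinarith
      · simp
    have hfxsum : f (∑ i, c i • v i) = ∑ i, c i * f (v i) := by
      rw [map_sum]; exact Finset.sum_congr rfl fun i _ => by rw [_root_.map_smul]; rfl
    have hAB : A - B = ∑ i, c i * f (v i) := by
      rw [hA, hB, ← Finset.sum_sub_distrib]
      refine Finset.sum_congr rfl fun i _ => ?_
      rw [ha, hb]; dsimp only; rw [hpos, hneg]; dsimp only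
      rcases lt_trichotomy (f (v i)) 0 with h | h | h
      · simp only [if_neg (asymm h), if_pos h]; ring
      · rw [h]; norm_num
      · simp only [if_pos h, if_neg (asymm h)]; ring
    have hBA : B ≤ A := by
      have : 0 ≤ A - B := by rw [hAB, ← hfxsum]; exact hfx
      linarith
    have hB0 : 0 ≤ B := Finset.sum_nonneg fun i _ => hb0 i
    rcases eq_or_lt_of_le hB0 with hBz | hBz
    · -- B = 0 : all negative-coefficient weights vanish
      have hbz : ∀ i, b i = 0 := by
        intro i
        have := (Finset.sum_eq_zero_iff_of_nonneg (fun i _ => hb0 i)).mp hBz.symm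
        exact this i (Finset.mem_univ i)
      have hcz : ∀ i, f (v i) < 0 → c i = 0 := by
        intro i hi
        have := hbz i
        rw [hb] at this; dsimp only at this; rw [hneg] at this
        simp only [if_pos hi, one_mul] at this
        nlinarith [hc i]
      refine ⟨Sum.elim c 0, ?_, ?_⟩
      · rintro (i | pq)
        · exact hc i
        · simp
      · rw [Fintype.sum_sum_type]
        simp only [Sum.elim_inl, Sum.elim_inr, Pi.zero_apply, zero_smul,
          Finset.sum_const_zero, add_zero, hw]
        refine Finset.sum_congr rfl fun i _ => ?_
        rw [hnn]; dsimp only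
        split_ifs with h
        · rw [one_smul]
        · rw [hcz i (not_le.mp h)]; simp
    · -- B > 0, hence A > 0
      have hA0 : 0 < A := lt_of_lt_of_le hBz hBA
      have hAne : A ≠ 0 := ne_of_gt hA0
      refine ⟨Sum.elim (fun i => c i * (1 - pos i * (B / A)))
          (fun pq => c pq.1 * c pq.2 / A), ?_, ?_⟩
      · rintro (i | pq)
        · simp only [Sum.elim_inl]
          rw [hpos]; dsimp only
          split_ifs with h
          · have h1 : B / A ≤ 1 := (div_le_one hA0).mpr hBA
            have := hc i; nlinarith
          · simp only [zero_mul, sub_zero, mul_one]; exact hc i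
        · simp only [Sum.elim_inr]
          have := hc pq.1; have := hc pq.2
          positivity
      · rw [Fintype.sum_sum_type]
        simp only [Sum.elim_inl, Sum.elim_inr, hw]
        have key : ∀ p q : ι, (c p * c q / A) • ((pos p * neg q) •
              (f (v p) • v q + (-f (v q)) • v p))
            = (a p * (neg q * c q) / A) • v q + ((pos p * c p) * b q / A) • v p := by
          intro p q
          rw [smul_smul, smul_add, smul_smul, smul_smul]
          congr 1
          · congr 1
            rw [ha, hpos, hneg]; dsimp only
            split_ifs <;> ring
          · congr 1
            rw [hb, hpos, hneg]; dsimp only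
            split_ifs <;> ring
        have hdouble : ∑ pq : ι × ι, (c pq.1 * c pq.2 / A) • ((pos pq.1 * neg pq.2) •
              (f (v pq.1) • v pq.2 + (-f (v pq.2)) • v pq.1))
            = ∑ q, (neg q * c q) • v q + ∑ p, (pos p * c p * (B / A)) • v p := by
          rw [Fintype.sum_prod_type]
          simp_rw [key, Finset.sum_add_distrib]
          congr 1
          · rw [Finset.sum_comm]
            refine Finset.sum_congr rfl fun q _ => ?_
            rw [← Finset.sum_smul, ← Finset.sum_div, ← Finset.sum_mul]
            rw [← hA, mul_comm A, mul_div_assoc, div_self hAne, mul_one]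
          · refine Finset.sum_congr rfl fun p _ => ?_
            rw [← Finset.sum_smul, ← Finset.sum_div, ← Finset.mul_sum, ← hB]
            congr 1
            ring
        rw [hdouble, ← add_assoc, ← Finset.sum_add_distrib, ← Finset.sum_add_distrib]
        refine (Finset.sum_congr rfl fun i _ => ?_).symm
        rw [smul_smul, ← add_smul, ← add_smul]
        congr 1
        rw [hpos, hneg, hnn]; dsimp only
        rcases lt_trichotomy (f (v i)) 0 with h | h | h
        · simp only [if_neg (asymm h), if_pos h, if_neg (not_le.mpr h)]; ring
        · rw [h]; norm_num
        · simp only [if_pos h, if_neg (asymm h), if_pos h.le]; ring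
  · -- easy direction
    intro x hx
    constructor
    · refine vcone_subset ?_ hx
      rintro (i | pq)
      · simp only [hw, Sum.elim_inl]
        rw [hnn]; dsimp only
        split_ifs with h
        · rw [one_smul]; exact mem_vcone_gen v i
        · rw [zero_smul]; exact vcone_zero_mem v
      · simp only [hw, Sum.elim_inr]
        rw [hpos, hneg]; dsimp only
        split_ifs with h1 h2
        · rw [one_mul, one_smul]
          exact vcone_add (vcone_smul h1.le (mem_vcone_gen v pq.2))
            (vcone_smul (by linarith) (mem_vcone_gen v pq.1))
        all_goals simpa using vcone_zero_mem v
    · obtain ⟨c, hc, rfl⟩ := hx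
      have : f (∑ j, c j • w j) = ∑ j, c j * f (w j) := by
        rw [map_sum]; exact Finset.sum_congr rfl fun j _ => by rw [_root_.map_smul]; rfl
      rw [Set.mem_setOf_eq, this]
      refine Finset.sum_nonneg fun j _ => mul_nonneg (hc j) ?_
      rcases j with i | pq
      · simp only [hw, Sum.elim_inl, _root_.map_smul]
        rw [hnn]; dsimp only
        split_ifs with h
        · simpa using h
        · simp
      · have h0 : f (f (v pq.1) • v pq.2 + (-f (v pq.2)) • v pq.1) = 0 := by
          rw [_root_.map_add, _root_.map_smul, _root_.map_smul, smul_eq_mul, smul_eq_mul]; ring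
        simp only [hw, Sum.elim_inr, _root_.map_smul, h0, smul_eq_mul, mul_zero, le_refl]

/-- `ℝ^n` itself is a `vcone` (generated by `±` the standard basis). -/
lemma univ_eq_vcone (n : ℕ) :
    (Set.univ : Set (Fin n → ℝ)) =
      vcone (Sum.elim (fun i : Fin n => Pi.single i (1:ℝ))
        (fun i : Fin n => -Pi.single i (1:ℝ))) := by
  apply Set.Subset.antisymm _ (Set.subset_univ _)
  intro x _
  refine ⟨Sum.elim (fun i => max (x i) 0) (fun i => max (-(x i)) 0),
    ?_, ?_⟩
  · rintro (i | i) <;> simp [le_max_right]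
  · have h1 : ∀ (c : Fin n → ℝ) (t : Fin n), (∑ i, c i • (Pi.single i 1 : Fin n → ℝ)) t = c t := by
      intro c t
      rw [Finset.sum_apply]
      simp [Pi.single_apply, Finset.sum_ite_eq]
    rw [Fintype.sum_sum_type]
    simp only [Sum.elim_inl, Sum.elim_inr, smul_neg, ← neg_smul]
    funext t
    rw [Pi.add_apply, h1, h1 (fun i => -(max (-(x i)) 0))]
    simp only [max_def]
    split_ifs <;> try linarith

/-- dot product with a fixed vector, as a linear map. -/
noncomputable def dotLin {n : ℕ} (b : Fin n → ℝ) : (Fin n → ℝ) →ₗ[ℝ] ℝ where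
  toFun x := b ⬝ᵥ x
  map_add' x y := dotProduct_add b x y
  map_smul' t x := dotProduct_smul t b x

@[simp] lemma dotLin_apply {n : ℕ} (b x : Fin n → ℝ) : dotLin b x = b ⬝ᵥ x := rfl

/-- An H-cone (finite intersection of homogeneous halfspaces) is a V-cone. -/
lemma hcone_eq_vcone {n : ℕ} : ∀ (m : ℕ) (b : Fin m → Fin n → ℝ),
    ∃ (κ : Type) (_ : Fintype κ) (w : κ → Fin n → ℝ),
      {x : Fin n → ℝ | ∀ j, 0 ≤ b j ⬝ᵥ x} = vcone w := by
  intro m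
  induction m with
  | zero =>
      intro b
      refine ⟨Fin n ⊕ Fin n, inferInstance,
        Sum.elim (fun i : Fin n => Pi.single i (1:ℝ)) (fun i : Fin n => -Pi.single i (1:ℝ)), ?_⟩
      rw [← univ_eq_vcone]
      ext x; simp
  | succ m ih =>
      intro b
      obtain ⟨κ, hκ, w, hweq⟩ := ih (fun j => b j.succ)
      obtain ⟨κ', hκ', w', hw'⟩ := vcone_inter_halfspace w (dotLin (b 0))
      refine ⟨κ', hκ', w', ?_⟩
      rw [← hw', ← hweq]
      ext x
      simp only [Set.mem_setOf_eq, Set.mem_inter_iff, dotLin_apply]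
      constructor
      · intro h; exact ⟨fun j => h j.succ, h 0⟩
      · rintro ⟨h1, h2⟩ j
        rcases Fin.eq_zero_or_eq_succ j with rfl | ⟨j', rfl⟩
        · exact h2
        · exact h1 j'

/-- The image of a V-cone under matrix multiplication is a V-cone. -/
lemma mulVec_image_vcone {n p : ℕ} {κ : Type} [Fintype κ] (M : Matrix (Fin p) (Fin n) ℝ)
    (w : κ → Fin n → ℝ) :
    (fun x => M.mulVec x) '' vcone w = vcone (fun j => M.mulVec (w j)) := by
  ext y
  constructor
  · rintro ⟨x, ⟨c, hc, rfl⟩, rfl⟩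
    refine ⟨c, hc, ?_⟩
    simp_rw [← Matrix.mulVecLin_apply, map_sum, _root_.map_smul]
  · rintro ⟨c, hc, rfl⟩
    refine ⟨∑ j, c j • w j, ⟨c, hc, rfl⟩, ?_⟩
    simp_rw [← Matrix.mulVecLin_apply, map_sum, _root_.map_smul]

open Finset in
/-- The family of strict sign patterns of the rows of a matrix, with a Sauer–Shelah
cardinality bound. -/
lemma exists_patterns {m kk : ℕ} (A : Matrix (Fin m) (Fin kk) ℝ) :
    ∃ 𝒜 : Finset (Finset (Fin m)),
      (∀ x : Fin kk → ℝ,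
        (Finset.univ.filter (fun t => 0 < A.mulVec x t) : Finset (Fin m)) ∈ 𝒜) ∧
      (∀ u ∈ 𝒜, ∃ x : Fin kk → ℝ,
        u = Finset.univ.filter (fun t => 0 < A.mulVec x t)) ∧
      (𝒜.card : ℕ) ≤ ∑ j ∈ Finset.Iic kk, m.choose j := by
  classical
  set 𝒜 : Finset (Finset (Fin m)) :=
    Set.Finite.toFinset (Set.toFinite
      {u : Finset (Fin m) | ∃ x : Fin kk → ℝ,
        u = Finset.univ.filter (fun t => 0 < A.mulVec x t)}) with h𝒜
  have hmem : ∀ u, u ∈ 𝒜 ↔ ∃ x : Fin kk → ℝ,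
      u = Finset.univ.filter (fun t => 0 < A.mulVec x t) := by
    intro u; rw [h𝒜, Set.Finite.mem_toFinset]; rfl
  refine ⟨𝒜, fun x => (hmem _).mpr ⟨x, rfl⟩, fun u hu => (hmem u).mp hu, ?_⟩
  -- VC dimension bound
  have hvc : 𝒜.vcDim ≤ kk := by
    apply Finset.sup_le
    intro s hs
    rw [Finset.mem_shatterer] at hs
    by_contra hcard
    push_neg at hcard
    -- the rows indexed by `s` are linearly dependent
    have hdep : ¬ LinearIndependent ℝ (fun i : ↥s => A (i : Fin m)) := by
      intro hli
      have := hli.fintype_card_le_finrank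
      rw [Fintype.card_coe, Module.finrank_fintype_fun_eq_card, Fintype.card_fin] at this
      omega
    rw [Fintype.not_linearIndependent_iff] at hdep
    obtain ⟨g, hgsum, i0, hgi0⟩ := hdep
    -- WLOG some coefficient is positive
    have key : ∀ g : ↥s → ℝ, ∑ i, g i • A (i : Fin m) = 0 →
        (∃ i, 0 < g i) → False := by
      rintro g hgsum ⟨ip, hip⟩
      set t : Finset (Fin m) := s.filter (fun a => ∃ h : a ∈ s, 0 < g ⟨a, h⟩) with ht
      obtain ⟨u, hu, hsu⟩ := hs (show t ⊆ s from Finset.filter_subset _ s)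
      obtain ⟨x, rfl⟩ := (hmem u).mp hu
      have hdot : ∑ i : ↥s, g i * (A (i : Fin m) ⬝ᵥ x) = 0 := by
        have h0 := congrArg (fun b => b ⬝ᵥ x) hgsum
        simp only [zero_dotProduct] at h0
        rw [← h0]
        simp only [dotProduct, Finset.sum_apply, Pi.smul_apply, smul_eq_mul,
          Finset.sum_mul, Finset.mul_sum, mul_assoc]
        exact Finset.sum_comm
      have hterm : ∀ i : ↥s, 0 ≤ g i * (A (i : Fin m) ⬝ᵥ x) := by
        intro i
        rcases lt_trichotomy (g i) 0 with h | h | h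
        · -- g i < 0 : then ↑i ∉ t, hence ↑i ∉ u, hence A ↑i ⬝ᵥ x ≤ 0
          have hit : (i : Fin m) ∉ t := by
            rw [ht, Finset.mem_filter]
            rintro ⟨-, hmem', hpos⟩
            rw [Subtype.coe_eta] at hpos
            exact absurd hpos (not_lt.mpr h.le)
          have hiu : (i : Fin m) ∉ Finset.univ.filter (fun t => 0 < A.mulVec x t) := by
            intro hiu
            exact hit (hsu ▸ Finset.mem_inter.mpr ⟨i.2, hiu⟩)
          rw [Finset.mem_filter] at hiu
          push_neg at hiu
          have := hiu (Finset.mem_univ _)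
          have hAx : A (i : Fin m) ⬝ᵥ x ≤ 0 := this
          nlinarith
        · rw [h, zero_mul]
        · -- 0 < g i : then ↑i ∈ t, hence ↑i ∈ u, hence 0 < A ↑i ⬝ᵥ x
          have hit : (i : Fin m) ∈ t := by
            rw [ht, Finset.mem_filter]
            exact ⟨i.2, i.2, by rwa [Subtype.coe_eta]⟩
          have hiu : (i : Fin m) ∈ Finset.univ.filter (fun t => 0 < A.mulVec x t) := by
            rw [← hsu] at hit
            exact (Finset.mem_inter.mp hit).2
          rw [Finset.mem_filter] at hiu
          have hAx : 0 < A (i : Fin m) ⬝ᵥ x := hiu.2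
          positivity
      have htermp : 0 < g ip * (A (ip : Fin m) ⬝ᵥ x) := by
        have hit : (ip : Fin m) ∈ t := by
          rw [ht, Finset.mem_filter]
          exact ⟨ip.2, ip.2, by rwa [Subtype.coe_eta]⟩
        have hiu : (ip : Fin m) ∈ Finset.univ.filter (fun t => 0 < A.mulVec x t) := by
          rw [← hsu] at hit
          exact (Finset.mem_inter.mp hit).2
        rw [Finset.mem_filter] at hiu
        have hAx : 0 < A (ip : Fin m) ⬝ᵥ x := hiu.2
        positivity
      have : 0 < ∑ i : ↥s, g i * (A (i : Fin m) ⬝ᵥ x) :=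
        Finset.sum_pos' (fun i _ => hterm i) ⟨ip, Finset.mem_univ _, htermp⟩
      rw [hdot] at this
      exact lt_irrefl 0 this
    rcases lt_or_gt_of_ne hgi0 with h | h
    · refine key (-g) ?_ ⟨i0, by simpa using h⟩
      have : ∑ i : ↥s, (-g) i • A (i : Fin m) = -∑ i : ↥s, g i • A (i : Fin m) := by
        rw [← Finset.sum_neg_distrib]
        exact Finset.sum_congr rfl fun i _ => by simp [neg_smul]
      rw [this, hgsum, neg_zero]
    · exact key g hgsum ⟨i0, h⟩
  calc 𝒜.card ≤ 𝒜.shatterer.card := Finset.card_le_card_shatterer 𝒜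
    _ ≤ ∑ j ∈ Finset.Iic 𝒜.vcDim, (Fintype.card (Fin m)).choose j :=
        Finset.card_shatterer_le_sum_vcDim
    _ ≤ ∑ j ∈ Finset.Iic kk, m.choose j := by
        rw [Fintype.card_fin]
        exact Finset.sum_le_sum_of_subset (Finset.Iic_subset_Iic.mpr hvc)

lemma sum_choose_le_pow {kk m : ℕ} (hk : 1 ≤ kk) (hkm : kk ≤ m) :
    ((∑ j ∈ Finset.Iic kk, m.choose j : ℕ) : ℝ) ≤ (Real.exp 1 * m / kk) ^ kk := by
  have hK : (0 : ℝ) < kk := by exact_mod_cast hk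
  have hM : (0 : ℝ) < m := lt_of_lt_of_le hK (by exact_mod_cast hkm)
  have hKM : (kk : ℝ) ≤ m := by exact_mod_cast hkm
  push_cast
  have step1 : (∑ j ∈ Finset.Iic kk, (m.choose j : ℝ)) ≤
      (∑ j ∈ Finset.Iic kk, (m.choose j : ℝ) * ((kk : ℝ)/m) ^ j) * ((m : ℝ)/kk) ^ kk := by
    rw [Finset.sum_mul]
    refine Finset.sum_le_sum fun j hj => ?_
    rw [Finset.mem_Iic] at hj
    have h1 : (1:ℝ) ≤ ((m : ℝ)/kk) ^ (kk - j) := one_le_pow₀ ((one_le_div hK).mpr hKM)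
    have heq : ((kk : ℝ)/m) ^ j * ((m : ℝ)/kk) ^ kk = ((m : ℝ)/kk) ^ (kk - j) := by
      have : ((kk : ℝ)/m) ^ j = (((m : ℝ)/kk) ^ j)⁻¹ := by
        rw [← inv_pow, inv_div]
      rw [this, mul_comm,
        ← pow_sub₀ _ (ne_of_gt (by positivity : (0:ℝ) < (m : ℝ)/kk)) hj]
    calc (m.choose j : ℝ) = (m.choose j : ℝ) * 1 := (mul_one _).symm
      _ ≤ (m.choose j : ℝ) * (((kk : ℝ)/m) ^ j * ((m : ℝ)/kk) ^ kk) := by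
          rw [heq]; exact mul_le_mul_of_nonneg_left h1 (by positivity)
      _ = (m.choose j : ℝ) * ((kk : ℝ)/m) ^ j * ((m : ℝ)/kk) ^ kk := by ring
  have step2 : (∑ j ∈ Finset.Iic kk, (m.choose j : ℝ) * ((kk : ℝ)/m) ^ j) ≤
      (1 + (kk : ℝ)/m) ^ m := by
    have hbin : ((kk : ℝ)/m + 1) ^ m =
        ∑ j ∈ Finset.range (m + 1), ((kk : ℝ)/m) ^ j * 1 ^ (m - j) * (m.choose j : ℝ) :=
      add_pow ((kk : ℝ)/m) 1 m
    rw [add_comm, hbin]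
    have hsub : Finset.Iic kk ⊆ Finset.range (m+1) := fun j hj => by
      rw [Finset.mem_range]; rw [Finset.mem_Iic] at hj; omega
    calc ∑ j ∈ Finset.Iic kk, (m.choose j : ℝ) * ((kk : ℝ)/m) ^ j
        = ∑ j ∈ Finset.Iic kk, ((kk : ℝ)/m) ^ j * 1 ^ (m-j) * (m.choose j : ℝ) :=
          Finset.sum_congr rfl fun j _ => by ring
      _ ≤ ∑ j ∈ Finset.range (m+1), ((kk : ℝ)/m) ^ j * 1 ^ (m-j) * (m.choose j : ℝ) :=
          Finset.sum_le_sum_of_subset_of_nonneg hsub (fun j _ _ => by positivity)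
  have step3 : ((1 : ℝ) + (kk : ℝ)/m) ^ m ≤ Real.exp 1 ^ kk := by
    have h1 : (1 : ℝ) + (kk : ℝ)/m ≤ Real.exp ((kk : ℝ)/m) := by
      have := Real.add_one_le_exp ((kk : ℝ)/m)
      linarith
    have h2 : ((1 : ℝ) + (kk : ℝ)/m) ^ m ≤ Real.exp ((kk : ℝ)/m) ^ m :=
      pow_le_pow_left₀ (by positivity) h1 m
    refine h2.trans ?_
    rw [← Real.exp_nat_mul, ← Real.exp_nat_mul]
    rw [Real.exp_le_exp]
    rw [mul_div_assoc', mul_comm, mul_div_assoc, div_self (ne_of_gt hM)]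
  calc (∑ j ∈ Finset.Iic kk, (m.choose j : ℝ))
      ≤ (∑ j ∈ Finset.Iic kk, (m.choose j : ℝ) * ((kk : ℝ)/m) ^ j) * ((m : ℝ)/kk) ^ kk := step1
    _ ≤ ((1 : ℝ) + (kk : ℝ)/m) ^ m * ((m : ℝ)/kk) ^ kk := by
        refine mul_le_mul_of_nonneg_right step2 (by positivity)
    _ ≤ Real.exp 1 ^ kk * ((m : ℝ)/kk) ^ kk := by
        refine mul_le_mul_of_nonneg_right step3 (by positivity)
    _ = (Real.exp 1 * m / kk) ^ kk := by
        rw [← mul_pow, mul_div_assoc]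

/-- An H-cone: an intersection of finitely many homogeneous closed halfspaces. -/
def IsHCone {n : ℕ} (P : Set (Fin n → ℝ)) : Prop :=
  ∃ (m : ℕ) (b : Fin m → Fin n → ℝ), P = {x | ∀ r, 0 ≤ b r ⬝ᵥ x}

lemma isHCone_univ {n : ℕ} : IsHCone (Set.univ : Set (Fin n → ℝ)) :=
  ⟨0, Fin.elim0, by ext x; simp⟩

lemma IsHCone.inter_halfspaces {n m2 : ℕ} {P : Set (Fin n → ℝ)} (hP : IsHCone P)
    (g : Fin m2 → Fin n → ℝ) :
    IsHCone (P ∩ {x | ∀ t, 0 ≤ g t ⬝ᵥ x}) := by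
  obtain ⟨m1, b, rfl⟩ := hP
  refine ⟨m1 + m2, Sum.elim b g ∘ finSumFinEquiv.symm, ?_⟩
  ext x
  simp only [Set.mem_inter_iff, Set.mem_setOf_eq, Function.comp_apply]
  constructor
  · rintro ⟨h1, h2⟩ r
    rcases h : finSumFinEquiv.symm r with s | s
    · exact h1 s
    · exact h2 s
  · intro h
    constructor
    · intro s
      have := h (finSumFinEquiv (Sum.inl s))
      rwa [Equiv.symm_apply_apply, Sum.elim_inl] at this
    · intro s
      have := h (finSumFinEquiv (Sum.inr s))
      rwa [Equiv.symm_apply_apply, Sum.elim_inr] at this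

lemma vcone_reindex {ι κ : Type*} [Fintype ι] [Fintype κ] (e : κ ≃ ι) (v : ι → V) :
    vcone (v ∘ e) = vcone v := by
  ext x
  constructor
  · rintro ⟨c, hc, rfl⟩
    refine ⟨c ∘ e.symm, fun i => hc _, ?_⟩
    rw [← Equiv.sum_comp e (fun i => (c ∘ e.symm) i • v i)]
    simp
  · rintro ⟨c, hc, rfl⟩
    refine ⟨c ∘ e, fun i => hc _, ?_⟩
    rw [← Equiv.sum_comp e (fun i => c i • v i)]
    rfl

/-- The image of an H-cone under matrix multiplication is a polyhedral cone. -/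
lemma IsHCone.image_isPolyhedralCone {n p : ℕ} {P : Set (Fin n → ℝ)} (hP : IsHCone P)
    (M : Matrix (Fin p) (Fin n) ℝ) :
    IsPolyhedralCone ((fun x => M.mulVec x) '' P) := by
  obtain ⟨m, b, rfl⟩ := hP
  obtain ⟨κ, hκ, w, hw⟩ := hcone_eq_vcone m b
  rw [hw, mulVec_image_vcone]
  refine ⟨Fintype.card κ, (fun j => M.mulVec (w j)) ∘ (Fintype.equivFin κ).symm, ?_⟩
  rw [show {x | ∃ c : Fin (Fintype.card κ) → ℝ, (∀ i, 0 ≤ c i) ∧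
      x = ∑ i, c i • ((fun j => M.mulVec (w j)) ∘ (Fintype.equivFin κ).symm) i}
    = vcone ((fun j => M.mulVec (w j)) ∘ (Fintype.equivFin κ).symm) from rfl]
  rw [vcone_reindex (Fintype.equivFin κ).symm]

lemma exists_pieces (k : ℕ → ℕ) (W : ∀ i : ℕ, Matrix (Fin (k (i + 1))) (Fin (k i)) ℝ)
    (hk : 1 ≤ k 0) :
    ∀ j : ℕ, (∀ i, i ≤ j → k 0 ≤ k i) →
    ∃ (ι : Type) (_ : Fintype ι) (P : ι → Set (Fin (k 0) → ℝ))
      (M : ι → Matrix (Fin (k j)) (Fin (k 0)) ℝ),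
      (∀ i, IsHCone (P i)) ∧
      (∀ z, ∃ i, z ∈ P i) ∧
      (∀ i, ∀ z ∈ P i, hid k W j z = (M i).mulVec z) ∧
      ((Fintype.card ι : ℝ) ≤
        ∏ ℓ ∈ Finset.range j, (Real.exp 1 * (k (ℓ + 1)) / (k 0)) ^ (k 0)) := by
  intro j
  induction j with
  | zero =>
      intro _
      refine ⟨PUnit, inferInstance, fun _ => Set.univ, fun _ => 1,
        fun _ => isHCone_univ, fun z => ⟨⟨⟩, Set.mem_univ z⟩, ?_, by simp⟩
      intro i z _
      rw [Matrix.one_mulVec]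
      rfl
  | succ j ih =>
      intro hmono
      obtain ⟨ι, hι, P, M, hHC, hcover, hlin, hcard⟩ := ih (fun i hi => hmono i (by omega))
      classical
      set A : ι → Matrix (Fin (k (j + 1))) (Fin (k 0)) ℝ := fun i => W j * M i with hA
      choose 𝒜 hpat hreal hAcard using fun i => exists_patterns (A i)
      refine ⟨Σ i : ι, {u // u ∈ 𝒜 i}, inferInstance,
        fun p => P p.1 ∩ {x | ∀ t, 0 ≤ (if t ∈ (p.2 : Finset (Fin (k (j+1)))) then (A p.1) t
          else -((A p.1) t)) ⬝ᵥ x},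
        fun p => Matrix.of (fun t s => if t ∈ (p.2 : Finset (Fin (k (j+1)))) then A p.1 t s else 0),
        fun p => (hHC p.1).inter_halfspaces _, ?_, ?_, ?_⟩
      · -- cover
        intro z
        obtain ⟨i, hi⟩ := hcover z
        refine ⟨⟨i, ⟨Finset.univ.filter (fun t => 0 < (A i).mulVec z t), hpat i z⟩⟩, hi, ?_⟩
        intro t
        by_cases ht : t ∈ Finset.univ.filter (fun t => 0 < (A i).mulVec z t)
        · rw [if_pos ht]
          rw [Finset.mem_filter] at ht
          exact le_of_lt ht.2
        · rw [if_neg ht]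
          rw [Finset.mem_filter] at ht
          push_neg at ht
          have h2 := ht (Finset.mem_univ t)
          rw [neg_dotProduct]
          have : (A i).mulVec z t ≤ 0 := h2
          have hrfl : (A i) t ⬝ᵥ z = (A i).mulVec z t := rfl
          linarith [hrfl ▸ this]
      · -- linearity
        rintro ⟨i, u⟩ z ⟨hzP, hzH⟩
        funext t
        show max (Matrix.mulVec (W j) (hid k W j z) t) 0 = _
        rw [hlin i z hzP, Matrix.mulVec_mulVec]
        have hWA : W j * M i = A i := rfl
        rw [hWA]
        have hMz : (Matrix.of (fun t s => if t ∈ (u : Finset (Fin (k (j+1)))) then A i t s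
            else 0)).mulVec z t = if t ∈ (u : Finset (Fin (k (j+1)))) then (A i).mulVec z t
            else 0 := by
          by_cases ht : t ∈ (u : Finset (Fin (k (j+1)))) <;>
            simp [Matrix.mulVec, dotProduct, ht]
        rw [hMz]
        have hzt := hzH t
        by_cases ht : t ∈ (u : Finset (Fin (k (j+1))))
        · rw [if_pos ht]
          rw [if_pos ht] at hzt
          exact max_eq_left hzt
        · rw [if_neg ht]
          rw [if_neg ht, neg_dotProduct] at hzt
          have : (A i).mulVec z t ≤ 0 := by
            have hrfl : (A i) t ⬝ᵥ z = (A i).mulVec z t := rfl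
            linarith [hrfl ▸ hzt]
          exact max_eq_right this
      · -- cardinality
        have h1 : (Fintype.card (Σ i : ι, {u // u ∈ 𝒜 i}) : ℝ)
            = ∑ i : ι, ((𝒜 i).card : ℝ) := by
          rw [Fintype.card_sigma]
          push_cast
          exact Finset.sum_congr rfl fun i _ => by rw [Fintype.card_coe]
        have hBnd : ∀ i : ι, ((𝒜 i).card : ℝ)
            ≤ (Real.exp 1 * (k (j + 1)) / (k 0)) ^ (k 0) := by
          intro i
          have := hAcard i
          calc ((𝒜 i).card : ℝ) ≤ ((∑ r ∈ Finset.Iic (k 0), (k (j+1)).choose r : ℕ) : ℝ) := by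
                exact_mod_cast this
            _ ≤ _ := sum_choose_le_pow hk (hmono (j+1) (by omega))
        rw [h1, Finset.prod_range_succ]
        calc ∑ i : ι, ((𝒜 i).card : ℝ)
            ≤ ∑ _i : ι, (Real.exp 1 * (k (j + 1)) / (k 0)) ^ (k 0) :=
              Finset.sum_le_sum fun i _ => hBnd i
          _ = (Fintype.card ι : ℝ) * (Real.exp 1 * (k (j + 1)) / (k 0)) ^ (k 0) := by
              rw [Finset.sum_const, Finset.card_univ, nsmul_eq_mul]
          _ ≤ _ := by
              refine mul_le_mul_of_nonneg_right hcard (by positivity)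

/-- the range of a `(k, d, n)`-generative ReLU network (here with
depth `d+1`, input width `k 0`, hidden widths `k 1, …, k d` and output width
`n = k (d+1)`, each hidden width at least `k 0`) is a union of at most
`N = ∏_{ℓ=1}^{d} 2^{k}·(e·k_ℓ/k)^{k}` polyhedral cones, each contained in a linear
subspace of dimension at most `k = k 0`; in particular
`log N ≤ k·∑_{i=1}^{d} log(2e·k_i/k)`. -/
theorem range_of_generative_network_is_union_of_cones
    (d : ℕ) (k : ℕ → ℕ) (W : ∀ i : ℕ, Matrix (Fin (k (i + 1))) (Fin (k i)) ℝ)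
    (hk : 2 ≤ k 0) (hmono : ∀ i, i ≤ d + 1 → k 0 ≤ k i) :
    ∃ (N : ℕ) (S : Fin N → Set (Fin (k (d + 1)) → ℝ)),
      (N : ℝ) ≤ ∏ ℓ ∈ Finset.range d, (2 : ℝ) ^ (k 0) * (Real.exp 1 * (k (ℓ + 1)) / (k 0)) ^ (k 0) ∧
      Real.log N ≤ (k 0) * ∑ i ∈ Finset.range d, Real.log (2 * Real.exp 1 * (k (i + 1)) / (k 0)) ∧
      {x | ∃ z, x = genNet k W d z} = ⋃ i, S i ∧
      (∀ i, IsPolyhedralCone (S i)) ∧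
      (∀ i, ∃ E : Submodule ℝ (Fin (k (d + 1)) → ℝ), Module.finrank ℝ E ≤ k 0 ∧ S i ⊆ E) := by
  have hk1 : 1 ≤ k 0 := by omega
  obtain ⟨ι, hι, P, M, hHC, hcover, hlin, hcard⟩ :=
    exists_pieces k W hk1 d (fun i hi => hmono i (by omega))
  have hk0R : (0:ℝ) < (k 0 : ℝ) := by exact_mod_cast hk1
  have hkiR : ∀ ℓ ∈ Finset.range d, (0:ℝ) < (k (ℓ+1) : ℝ) := by
    intro ℓ hℓ
    rw [Finset.mem_range] at hℓ
    have := hmono (ℓ+1) (by omega)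
    exact_mod_cast lt_of_lt_of_le (by omega : 0 < k 0) this
  set e := Fintype.equivFin ι with he
  refine ⟨Fintype.card ι,
    fun i => (fun x => ((W d) * M (e.symm i)).mulVec x) '' P (e.symm i), ?_, ?_, ?_, ?_, ?_⟩
  · -- cardinality bound
    refine hcard.trans (Finset.prod_le_prod (fun ℓ _ => by positivity) ?_)
    intro ℓ hℓ
    have h2 : (1:ℝ) ≤ (2:ℝ) ^ (k 0) := one_le_pow₀ one_le_two
    nlinarith [pow_nonneg (by positivity : (0:ℝ) ≤ Real.exp 1 * (k (ℓ + 1)) / (k 0)) (k 0)]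
  · -- log bound
    have hNpos : 0 < Fintype.card ι := Fintype.card_pos_iff.mpr ⟨(hcover 0).choose⟩
    have hfac : ∀ ℓ ∈ Finset.range d, (0:ℝ) < 2 * Real.exp 1 * (k (ℓ + 1)) / (k 0) := by
      intro ℓ hℓ
      have := hkiR ℓ hℓ
      positivity
    have hbound : (Fintype.card ι : ℝ) ≤
        ∏ ℓ ∈ Finset.range d, (2 * Real.exp 1 * (k (ℓ + 1)) / (k 0)) ^ (k 0) := by
      refine hcard.trans (Finset.prod_le_prod (fun ℓ _ => by positivity) ?_)
      intro ℓ hℓ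
      have h1 : Real.exp 1 * (k (ℓ + 1)) / (k 0) ≤ 2 * Real.exp 1 * (k (ℓ + 1)) / (k 0) := by
        have := hkiR ℓ hℓ
        have he1 : 0 < Real.exp 1 := Real.exp_pos 1
        rw [div_le_div_iff₀ hk0R hk0R]
        nlinarith [mul_pos (mul_pos he1 (hkiR ℓ hℓ)) hk0R]
      exact pow_le_pow_left₀ (by positivity) h1 _
    calc Real.log (Fintype.card ι) ≤
        Real.log (∏ ℓ ∈ Finset.range d, (2 * Real.exp 1 * (k (ℓ + 1)) / (k 0)) ^ (k 0)) := by
          refine Real.log_le_log (by exact_mod_cast hNpos) hbound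
      _ = ∑ ℓ ∈ Finset.range d, Real.log ((2 * Real.exp 1 * (k (ℓ + 1)) / (k 0)) ^ (k 0)) := by
          refine Real.log_prod fun ℓ hℓ => ?_
          exact ne_of_gt (pow_pos (hfac ℓ hℓ) _)
      _ = ∑ ℓ ∈ Finset.range d, (k 0 : ℝ) * Real.log (2 * Real.exp 1 * (k (ℓ + 1)) / (k 0)) := by
          refine Finset.sum_congr rfl fun ℓ hℓ => ?_
          rw [Real.log_pow]
      _ = (k 0 : ℝ) * ∑ ℓ ∈ Finset.range d, Real.log (2 * Real.exp 1 * (k (ℓ + 1)) / (k 0)) := by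
          rw [Finset.mul_sum]
  · -- range equality
    ext x
    simp only [Set.mem_setOf_eq, Set.mem_iUnion, Set.mem_image]
    constructor
    · rintro ⟨z, rfl⟩
      obtain ⟨i, hi⟩ := hcover z
      refine ⟨e i, z, by rwa [Equiv.symm_apply_apply], ?_⟩
      rw [Equiv.symm_apply_apply]
      show (W d * M i).mulVec z = genNet k W d z
      rw [genNet, hlin i z hi, Matrix.mulVec_mulVec]
    · rintro ⟨i, z, hz, rfl⟩
      refine ⟨z, ?_⟩
      rw [genNet, hlin (e.symm i) z hz, Matrix.mulVec_mulVec]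
  · -- polyhedral cones
    intro i
    exact (hHC (e.symm i)).image_isPolyhedralCone _
  · -- low-dimensional subspaces
    intro i
    refine ⟨LinearMap.range ((W d * M (e.symm i)).mulVecLin), ?_, ?_⟩
    · have h1 := LinearMap.finrank_range_le ((W d * M (e.symm i)).mulVecLin)
      rwa [Module.finrank_fintype_fun_eq_card, Fintype.card_fin] at h1
    · rintro y ⟨x, -, rfl⟩
      exact ⟨x, (Matrix.mulVecLin_apply _ _)⟩
end

section
/- Let S ⊆ ℝ^n be a k-dimensional linear subspace (1 ≤ k ≤ n). Then the number of sign vectors ε ∈ {−1, +1}^n for which there exists x ∈ S with ε_i·x_i > 0 for all i ∈ [n] (i.e., the number of open orthants of ℝ^n that S intersects) is at most 2^k·C(n,k), where C(n,k) is the binomial coefficient; consequently it is at most 2^k·(e·n/k)^k. -/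
open Finset in
lemma sum_choose_pascal (m n : ℕ) :
    (∑ j ∈ range (m+2), Nat.choose n j) + ∑ j ∈ range (m+1), Nat.choose n j
      = ∑ j ∈ range (m+2), Nat.choose (n+1) j := by
  induction m with
  | zero => simp [Finset.sum_range_succ, Nat.choose_one_right]; omega
  | succ m ih =>
      rw [Finset.sum_range_succ (fun j => Nat.choose n j) (m+2),
        Finset.sum_range_succ (fun j => Nat.choose n j) (m+1),
        Finset.sum_range_succ (fun j => Nat.choose (n+1) j) (m+2)]
      have h : Nat.choose (n+1) (m+2) = Nat.choose n (m+1) + Nat.choose n (m+2) :=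
        Nat.choose_succ_succ' n (m+1)
      rw [Finset.sum_range_succ (fun j => Nat.choose n j) (m+1)] at ih
      omega

lemma signs_le (n : ℕ) : ∀ (k : ℕ) (V : Type) [AddCommGroup V] [Module ℝ V]
    [FiniteDimensional ℝ V] (f : Fin n → V →ₗ[ℝ] ℝ), Module.finrank ℝ V ≤ k →
    Set.ncard {ε : Fin n → Bool | ∃ x : V, ∀ i, if ε i then 0 < f i x else f i x < 0}
      ≤ ∑ j ∈ Finset.range (k+1), Nat.choose n j := by
  induction n with
  | zero =>
      intro k V _ _ _ f hk
      have h1 : {ε : Fin 0 → Bool | ∃ x : V, ∀ i, if ε i then 0 < f i x else f i x < 0}.ncard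
          ≤ 1 := by
        rw [Set.ncard_le_one (Set.toFinite _)]
        intro a _ b _
        exact Subsingleton.elim a b
      have h3 : 1 ≤ ∑ j ∈ Finset.range (k+1), Nat.choose 0 j :=
        Finset.single_le_sum (f := fun j => Nat.choose 0 j) (fun _ _ => Nat.zero_le _)
          (Finset.mem_range.2 (Nat.succ_pos k))
      exact le_trans h1 h3
  | succ n ih =>
      intro k V _ _ _ f hk
      set A : Set (Fin (n+1) → Bool) :=
        {ε | ∃ x : V, ∀ i, if ε i then 0 < f i x else f i x < 0} with hA
      by_cases hg : f (Fin.last n) = 0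
      · -- A is empty
        have : A = ∅ := by
          ext ε; simp only [Set.mem_empty_iff_false, iff_false, hA, Set.mem_setOf_eq]
          rintro ⟨x, hx⟩
          have := hx (Fin.last n)
          rw [hg] at this
          simp at this
        simp [this]
      · -- g ≠ 0
        have hV : 1 ≤ Module.finrank ℝ V := by
          by_contra h
          have h0 : Module.finrank ℝ V = 0 := by omega
          have : Subsingleton V := Module.finrank_zero_iff.mp h0
          exact hg (by ext x; rw [Subsingleton.elim x 0]; simp)
        obtain ⟨m, rfl⟩ : ∃ m, k = m + 1 := ⟨k - 1, by omega⟩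
        set g : V →ₗ[ℝ] ℝ := f (Fin.last n) with hgdef
        set W : Submodule ℝ V := LinearMap.ker g with hW
        have hWrank : Module.finrank ℝ W ≤ m := by
          have hlt : W < ⊤ := lt_top_iff_ne_top.2 (by
            intro h
            apply hg
            ext x
            have : x ∈ W := h ▸ Submodule.mem_top
            simpa [hW] using this)
          have := Submodule.finrank_lt (K := ℝ) (V := V) hlt.ne
          omega
        set f' : Fin n → W →ₗ[ℝ] ℝ := fun i => (f i.castSucc).comp W.subtype with hf'
        set fV : Fin n → V →ₗ[ℝ] ℝ := fun i => f i.castSucc with hfV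
        set A' : Set (Fin n → Bool) :=
          {ε | ∃ x : V, ∀ i, if ε i then 0 < fV i x else fV i x < 0} with hA'
        set K : Set (Fin n → Bool) :=
          {ε | ∃ w : W, ∀ i, if ε i then 0 < f' i w else f' i w < 0} with hK
        set r : (Fin (n+1) → Bool) → (Fin n → Bool) := fun ε i => ε i.castSucc with hr
        set A₁ : Set (Fin (n+1) → Bool) := {ε ∈ A | ε (Fin.last n) = true} with hA₁
        set A₂ : Set (Fin (n+1) → Bool) := {ε ∈ A | ε (Fin.last n) = false} with hA₂
        -- injectivity of r on A₁ and A₂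
        have hinj : ∀ b : Bool, Set.InjOn r {ε ∈ A | ε (Fin.last n) = b} := by
          intro b ε hε ε' hε' h
          funext i
          induction i using Fin.lastCases with
          | last => rw [hε.2, hε'.2]
          | cast j => exact congrFun h j
        -- images land in A'
        have himg : ∀ b : Bool, r '' {ε ∈ A | ε (Fin.last n) = b} ⊆ A' := by
          rintro b ε' ⟨ε, ⟨⟨x, hx⟩, -⟩, rfl⟩
          exact ⟨x, fun i => hx i.castSucc⟩
        -- intersection lands in K
        have hint : (r '' A₁) ∩ (r '' A₂) ⊆ K := by
          rintro ε' ⟨⟨ε, ⟨⟨x, hx⟩, hεl⟩, hεr⟩, ⟨ζ, ⟨⟨y, hy⟩, hζl⟩, hζr⟩⟩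
          have hgx : 0 < g x := by have := hx (Fin.last n); rw [hεl] at this; exact this
          have hgy : g y < 0 := by have := hy (Fin.last n); rw [hζl] at this; exact this
          set t : ℝ := g x / (g x - g y) with ht
          have hsub : 0 < g x - g y := by linarith
          have ht0 : 0 < t := div_pos hgx hsub
          have ht1 : t < 1 := (div_lt_one hsub).2 (by linarith)
          set z : V := (1 - t) • x + t • y with hz
          have hgz : z ∈ W := by
            simp only [hW, LinearMap.mem_ker, hz, map_add, map_smul, smul_eq_mul]
            field_simp [ht]
            have key : t * (g x - g y) = g x := by rw [ht]; exact div_mul_cancel₀ _ hsub.ne'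
            linear_combination -key
          refine ⟨⟨z, hgz⟩, fun i => ?_⟩
          have hfz : f' i ⟨z, hgz⟩ = (1 - t) * f i.castSucc x + t * f i.castSucc y := by
            simp [hf', hz, map_add, map_smul, smul_eq_mul]
          have hxi : if ε' i then 0 < f i.castSucc x else f i.castSucc x < 0 := by
            have := hx i.castSucc
            rwa [show ε i.castSucc = ε' i from congrFun hεr i] at this
          have hyi : if ε' i then 0 < f i.castSucc y else f i.castSucc y < 0 := by
            have := hy i.castSucc
            rwa [show ζ i.castSucc = ε' i from congrFun hζr i] at this
          cases hb : ε' i with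
          | true =>
              simp only [hb, if_true] at hxi hyi ⊢
              rw [hfz]
              have h1 := mul_pos (show (0:ℝ) < 1 - t by linarith) hxi
              have h2 := mul_pos ht0 hyi
              linarith
          | false =>
              simp only [hb, Bool.false_eq_true, if_false] at hxi hyi ⊢
              rw [hfz]
              have h1 := mul_neg_of_pos_of_neg (show (0:ℝ) < 1 - t by linarith) hxi
              have h2 := mul_neg_of_pos_of_neg ht0 hyi
              linarith
        -- counting
        have hAsplit : A = A₁ ∪ A₂ := by
          ext ε
          simp only [hA₁, hA₂, Set.mem_union, Set.mem_setOf_eq]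
          cases h : ε (Fin.last n) <;> tauto
        have hdisj : Disjoint A₁ A₂ := by
          rw [Set.disjoint_left]
          rintro ε ⟨-, h1⟩ ⟨-, h2⟩
          rw [h1] at h2; simp at h2
        have e1 : A.ncard = A₁.ncard + A₂.ncard := by
          rw [hAsplit]
          exact Set.ncard_union_eq hdisj (Set.toFinite _) (Set.toFinite _)
        have e2 : A₁.ncard = (r '' A₁).ncard := (Set.ncard_image_of_injOn (hinj true)).symm
        have e3 : A₂.ncard = (r '' A₂).ncard := (Set.ncard_image_of_injOn (hinj false)).symm
        have e4 : (r '' A₁).ncard + (r '' A₂).ncard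
            = ((r '' A₁) ∪ (r '' A₂)).ncard + ((r '' A₁) ∩ (r '' A₂)).ncard :=
          (Set.ncard_union_add_ncard_inter _ _ (Set.toFinite _) (Set.toFinite _)).symm
        have e5 : ((r '' A₁) ∪ (r '' A₂)).ncard ≤ A'.ncard :=
          Set.ncard_le_ncard (Set.union_subset (himg true) (himg false)) (Set.toFinite _)
        have e6 : ((r '' A₁) ∩ (r '' A₂)).ncard ≤ K.ncard :=
          Set.ncard_le_ncard hint (Set.toFinite _)
        have b1 : A'.ncard ≤ ∑ j ∈ Finset.range (m+1+1), Nat.choose n j :=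
          ih (m+1) V fV hk
        have b2 : K.ncard ≤ ∑ j ∈ Finset.range (m+1), Nat.choose n j :=
          ih m W f' hWrank
        have hps : (∑ j ∈ Finset.range (m+1+1), Nat.choose n j)
              + ∑ j ∈ Finset.range (m+1), Nat.choose n j
            = ∑ j ∈ Finset.range (m+1+1), Nat.choose (n+1) j := sum_choose_pascal m n
        omega

lemma sum_choose_le (n k : ℕ) (hkn : k ≤ n) :
    ∑ j ∈ Finset.range (k+1), Nat.choose n j ≤ 2 ^ k * Nat.choose n k := by
  have h : ∀ j ∈ Finset.range (k+1), Nat.choose n j ≤ Nat.choose k j * Nat.choose n k := by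
    intro j hj
    have hjk : j ≤ k := by simpa [Nat.lt_succ_iff] using Finset.mem_range.mp hj
    have hid := Nat.choose_mul (n := n) hjk
    calc Nat.choose n j = Nat.choose n j * 1 := (Nat.mul_one _).symm
      _ ≤ Nat.choose n j * (n - j).choose (k - j) :=
          Nat.mul_le_mul_left _ (Nat.choose_pos (by omega : k - j ≤ n - j))
      _ = Nat.choose n k * Nat.choose k j := hid.symm
      _ = Nat.choose k j * Nat.choose n k := Nat.mul_comm _ _
  calc ∑ j ∈ Finset.range (k+1), Nat.choose n j
      ≤ ∑ j ∈ Finset.range (k+1), Nat.choose k j * Nat.choose n k := Finset.sum_le_sum h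
    _ = (∑ j ∈ Finset.range (k+1), Nat.choose k j) * Nat.choose n k := by
        rw [Finset.sum_mul]
    _ = 2 ^ k * Nat.choose n k := by rw [Nat.sum_range_choose]

lemma pow_self_le_factorial_mul_exp (k : ℕ) :
    (k : ℝ) ^ k ≤ (Nat.factorial k : ℝ) * Real.exp 1 ^ k := by
  induction k with
  | zero => simp
  | succ k ih =>
      have he1 : (1:ℝ) ≤ Real.exp 1 := by
        have := Real.add_one_le_exp (1:ℝ); linarith
      have key : ((k:ℝ) + 1) ^ k ≤ (k:ℝ) ^ k * Real.exp 1 := by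
        rcases Nat.eq_zero_or_pos k with rfl | hk
        · simpa using he1
        · have hk0 : (0:ℝ) < k := by exact_mod_cast hk
          have h1 : (1 + 1/(k:ℝ)) ≤ Real.exp (1/(k:ℝ)) := by
            have := Real.add_one_le_exp (1/(k:ℝ)); linarith
          have h2 : (1 + 1/(k:ℝ)) ^ k ≤ Real.exp (1/(k:ℝ)) ^ k :=
            pow_le_pow_left₀ (by positivity) h1 k
          have h3 : Real.exp (1/(k:ℝ)) ^ k = Real.exp 1 := by
            rw [← Real.exp_nat_mul]
            congr 1
            field_simp
          have h4 : ((k:ℝ) + 1) = (k:ℝ) * (1 + 1/(k:ℝ)) := by field_simp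
          calc ((k:ℝ) + 1) ^ k = (k:ℝ) ^ k * (1 + 1/(k:ℝ)) ^ k := by
                rw [h4, mul_pow]
            _ ≤ (k:ℝ) ^ k * Real.exp 1 := by
                rw [← h3]
                exact mul_le_mul_of_nonneg_left h2 (by positivity)
      have hcast : ((k+1 : ℕ) : ℝ) = (k:ℝ) + 1 := by push_cast; ring
      calc ((k+1 : ℕ) : ℝ) ^ (k+1) = ((k:ℝ) + 1) * ((k:ℝ) + 1) ^ k := by
            rw [hcast, pow_succ]; ring
        _ ≤ ((k:ℝ) + 1) * ((k:ℝ) ^ k * Real.exp 1) := by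
            apply mul_le_mul_of_nonneg_left key (by positivity)
        _ ≤ ((k:ℝ) + 1) * ((Nat.factorial k : ℝ) * Real.exp 1 ^ k * Real.exp 1) := by
            apply mul_le_mul_of_nonneg_left _ (by positivity)
            exact mul_le_mul_of_nonneg_right ih (by positivity)
        _ = (Nat.factorial (k+1) : ℝ) * Real.exp 1 ^ (k+1) := by
            rw [Nat.factorial_succ]
            push_cast
            ring

lemma choose_le_exp_pow (n k : ℕ) (hk : 1 ≤ k) (hkn : k ≤ n) :
    (Nat.choose n k : ℝ) ≤ (Real.exp 1 * n / k) ^ k := by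
  have hk0 : (0:ℝ) < k := by exact_mod_cast hk
  have hkk : (0:ℝ) < (k:ℝ) ^ k := by positivity
  have h1 : (Nat.choose n k : ℝ) * (Nat.factorial k : ℝ) ≤ (n:ℝ) ^ k := by
    have h2 : Nat.choose n k * Nat.factorial k ≤ n ^ k := by
      rw [Nat.mul_comm, ← Nat.descFactorial_eq_factorial_mul_choose]
      exact Nat.descFactorial_le_pow n k
    exact_mod_cast h2
  rw [div_pow, mul_pow, le_div_iff₀ hkk]
  have hfac : (0:ℝ) < (Nat.factorial k : ℝ) := by positivity
  calc (Nat.choose n k : ℝ) * (k:ℝ) ^ k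
      ≤ (Nat.choose n k : ℝ) * ((Nat.factorial k : ℝ) * Real.exp 1 ^ k) :=
        mul_le_mul_of_nonneg_left (pow_self_le_factorial_mul_exp k) (by positivity)
    _ = ((Nat.choose n k : ℝ) * (Nat.factorial k : ℝ)) * Real.exp 1 ^ k := by ring
    _ ≤ (n:ℝ) ^ k * Real.exp 1 ^ k := mul_le_mul_of_nonneg_right h1 (by positivity)
    _ = Real.exp 1 ^ k * (n:ℝ) ^ k := by ring

/-- a `k`-dimensional linear subspace `S ⊆ ℝ^n` intersects at most
`2^k·C(n,k)` open orthants (orthants encoded by sign vectors `ε : Fin n → Bool`),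
and consequently at most `2^k·(e·n/k)^k` of them. -/
theorem orthant_crossings (n k : ℕ) (hk : 1 ≤ k) (hkn : k ≤ n)
    (S : Submodule ℝ (Fin n → ℝ)) (hS : Module.finrank ℝ S = k) :
    Set.ncard {ε : Fin n → Bool | ∃ x ∈ S, ∀ i, if ε i then 0 < x i else x i < 0}
        ≤ 2 ^ k * Nat.choose n k ∧
      (Set.ncard {ε : Fin n → Bool | ∃ x ∈ S, ∀ i, if ε i then 0 < x i else x i < 0} : ℝ)
        ≤ 2 ^ k * (Real.exp 1 * n / k) ^ k := by
  set f : Fin n → (S →ₗ[ℝ] ℝ) :=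
    fun i => (LinearMap.proj i).comp S.subtype with hf
  have hsets : {ε : Fin n → Bool | ∃ x ∈ S, ∀ i, if ε i then 0 < x i else x i < 0}
      = {ε : Fin n → Bool | ∃ x : S, ∀ i, if ε i then 0 < f i x else f i x < 0} := by
    ext ε
    constructor
    · rintro ⟨x, hxS, hx⟩
      exact ⟨⟨x, hxS⟩, hx⟩
    · rintro ⟨⟨x, hxS⟩, hx⟩
      exact ⟨x, hxS, hx⟩
  have h1 : Set.ncard {ε : Fin n → Bool | ∃ x ∈ S, ∀ i, if ε i then 0 < x i else x i < 0}
      ≤ 2 ^ k * Nat.choose n k := by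
    rw [hsets]
    calc _ ≤ ∑ j ∈ Finset.range (k+1), Nat.choose n j :=
          signs_le n k S f (le_of_eq hS)
      _ ≤ 2 ^ k * Nat.choose n k := sum_choose_le n k hkn
  refine ⟨h1, ?_⟩
  calc (Set.ncard {ε : Fin n → Bool | ∃ x ∈ S, ∀ i, if ε i then 0 < x i else x i < 0} : ℝ)
      ≤ ((2 ^ k * Nat.choose n k : ℕ) : ℝ) := by exact_mod_cast h1
    _ = 2 ^ k * (Nat.choose n k : ℝ) := by push_cast; ring
    _ ≤ 2 ^ k * (Real.exp 1 * n / k) ^ k :=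
        mul_le_mul_of_nonneg_left (choose_le_exp_pow n k hk hkn) (by positivity)
end

section
/- Let N, M be positive integers and let C_1, C_2, …, C_N ⊆ ℝ^M be convex cones such that their union C := ∪_{i=1}^N C_i is convex. Then there exists i ∈ [N] such that span(C) = span(C_i), where span denotes the linear hull. -/
open Set

lemma aux_pair_mem {E ι : Type*} [AddCommGroup E] [Module ℝ E] [DecidableEq ι]
    (u : Finset ι) (W : ι → Submodule ℝ E) {x y : E}
    (h : ∀ t : ℝ, t ∈ Set.Ioo (0:ℝ) 1 → ∃ i ∈ u, (1 - t) • x + t • y ∈ W i) :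
    ∃ i ∈ u, x ∈ W i ∧ y ∈ W i := by
  have hinf : (Set.Ioo (0:ℝ) 1).Infinite := Set.Ioo_infinite (by norm_num)
  haveI := hinf.to_subtype
  choose f hf1 hf2 using fun t : Set.Ioo (0:ℝ) 1 => h t t.2
  let g : Set.Ioo (0:ℝ) 1 → u := fun t => ⟨f t, hf1 t⟩
  obtain ⟨s, t, hst, hgeq⟩ := Finite.exists_ne_map_eq_of_infinite g
  have hfeq : f s = f t := congrArg Subtype.val hgeq
  have hst' : (s : ℝ) ≠ (t : ℝ) := fun h => hst (Subtype.coe_injective h)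
  refine ⟨f s, hf1 s, ?_, ?_⟩
  · -- x ∈ W (f s)
    have hp := hf2 s
    have hq := hf2 t; rw [← hfeq] at hq
    have hd : ((t : ℝ) - s) • (x - y) ∈ W (f s) := by
      have := (W (f s)).sub_mem hp hq
      convert this using 1
      module
    have hxy : x - y ∈ W (f s) := by
      have := (W (f s)).smul_mem ((t : ℝ) - s)⁻¹ hd
      rwa [smul_smul, inv_mul_cancel₀ (sub_ne_zero.mpr (Ne.symm hst')), one_smul] at this
    have : x ∈ W (f s) := by
      have := (W (f s)).add_mem hp ((W (f s)).smul_mem (s : ℝ) hxy)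
      convert this using 1
      module
    exact this
  · -- y ∈ W (f s)
    have hp := hf2 s
    have hq := hf2 t; rw [← hfeq] at hq
    have hd : ((t : ℝ) - s) • (x - y) ∈ W (f s) := by
      have := (W (f s)).sub_mem hp hq
      convert this using 1
      module
    have hxy : x - y ∈ W (f s) := by
      have := (W (f s)).smul_mem ((t : ℝ) - s)⁻¹ hd
      rwa [smul_smul, inv_mul_cancel₀ (sub_ne_zero.mpr (Ne.symm hst')), one_smul] at this
    have hx : x ∈ W (f s) := by
      have := (W (f s)).add_mem hp ((W (f s)).smul_mem (s : ℝ) hxy)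
      convert this using 1
      module
    have : y = x - (x - y) := by abel
    rw [this]
    exact (W (f s)).sub_mem hx hxy

lemma aux_convex_subset {E ι : Type*} [AddCommGroup E] [Module ℝ E] [DecidableEq ι]
    (u : Finset ι) (W : ι → Submodule ℝ E) (S : Set E) (hS : Convex ℝ S)
    (hne : S.Nonempty) (hsub : S ⊆ ⋃ i ∈ u, (W i : Set E)) :
    ∃ i ∈ u, S ⊆ W i := by
  revert hsub
  induction u using Finset.induction_on with
  | empty =>
    intro hsub
    obtain ⟨x, hx⟩ := hne
    simpa using hsub hx
  | @insert a u ha ih =>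
    intro hsub
    by_cases hcase : S ⊆ ⋃ i ∈ u, (W i : Set E)
    · obtain ⟨i, hi, hSi⟩ := ih hcase
      exact ⟨i, Finset.mem_insert_of_mem hi, hSi⟩
    · rw [Set.not_subset] at hcase
      obtain ⟨x, hxS, hx⟩ := hcase
      refine ⟨a, Finset.mem_insert_self a u, fun y hyS => ?_⟩
      have hpair : ∃ i ∈ insert a u, x ∈ W i ∧ y ∈ W i := by
        apply aux_pair_mem
        intro t ht
        have hpt : (1 - t) • x + t • y ∈ S :=
          hS hxS hyS (by linarith [ht.1, ht.2]) (le_of_lt ht.1) (by ring)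
        have := hsub hpt
        simpa using this
      obtain ⟨i, hi, hxi, hyi⟩ := hpair
      rcases Finset.mem_insert.mp hi with h | h
      · exact h ▸ hyi
      · exact absurd (Set.mem_biUnion h hxi) hx

/-- if convex cones `C_1, …, C_N ⊆ ℝ^M` (convex sets closed under
multiplication by nonnegative scalars) have a convex union `C`, then the linear hull
of `C` equals the linear hull of one of the `C_i`. -/
theorem span_of_convex_union_of_cones (N M : ℕ) (hN : 0 < N)
    (C : Fin N → Set (Fin M → ℝ))
    (hconv : ∀ i, Convex ℝ (C i))
    (hcone : ∀ i, ∀ c : ℝ, 0 ≤ c → ∀ x ∈ C i, c • x ∈ C i)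
    (hunion : Convex ℝ (⋃ i, C i)) :
    ∃ i, Submodule.span ℝ (⋃ j, C j) = Submodule.span ℝ (C i) := by
  by_cases hne : (⋃ i, C i).Nonempty
  · have hsub : (⋃ i, C i) ⊆ ⋃ i ∈ (Finset.univ : Finset (Fin N)),
        ((Submodule.span ℝ (C i) : Submodule ℝ (Fin M → ℝ)) : Set (Fin M → ℝ)) := by
      intro x hx
      obtain ⟨i, hi⟩ := Set.mem_iUnion.mp hx
      exact Set.mem_biUnion (Finset.mem_univ i) (Submodule.subset_span hi)
    obtain ⟨i, _, hSi⟩ := aux_convex_subset Finset.univ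
      (fun i => Submodule.span ℝ (C i)) (⋃ i, C i) hunion hne hsub
    refine ⟨i, le_antisymm (Submodule.span_le.mpr hSi) ?_⟩
    exact Submodule.span_mono (Set.subset_iUnion C i)
  · refine ⟨⟨0, hN⟩, ?_⟩
    rw [Set.not_nonempty_iff_eq_empty] at hne
    have : C ⟨0, hN⟩ = ∅ := by
      have := Set.subset_iUnion C ⟨0, hN⟩
      rw [hne] at this
      exact Set.subset_empty_iff.mp this
    rw [hne, this]
end

section
/- Let C ⊆ ℝ^n be a set admitting two finite decompositions into convex cones: C = ∪_{i=1}^N F_i = ∪_{j=1}^M D_j, where each F_i and each D_j is a convex cone. Then ∪_{i=1}^N span(F_i) = ∪_{j=1}^M span(D_j). In other words, the piecewise linear expansion Δ(C) := ∪_i span(C_i), defined from any finite decomposition C = ∪_i C_i into convex cones, is independent of the chosen decomposition. -/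
/-- One inclusion: if each `F i` is a convex cone contained in `⋃ j, D j`,
then `⋃ i, span (F i) ⊆ ⋃ j, span (D j)`. -/
theorem union_span_subset_aux {n N M : ℕ} (hM : 0 < M)
    (F : Fin N → Set (Fin n → ℝ)) (D : Fin M → Set (Fin n → ℝ))
    (hFconv : ∀ i, Convex ℝ (F i))
    (hFcone : ∀ i, ∀ c : ℝ, 0 ≤ c → ∀ x ∈ F i, c • x ∈ F i)
    (hsub : (⋃ i, F i) ⊆ ⋃ j, D j) :
    (⋃ i, (Submodule.span ℝ (F i) : Set (Fin n → ℝ)))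
      ⊆ ⋃ j, (Submodule.span ℝ (D j) : Set (Fin n → ℝ)) := by
  have hzero : (0 : Fin n → ℝ) ∈ ⋃ j, (Submodule.span ℝ (D j) : Set (Fin n → ℝ)) := by
    exact Set.mem_iUnion.2 ⟨⟨0, hM⟩, Submodule.zero_mem _⟩
  intro x hx
  rcases Set.mem_iUnion.1 hx with ⟨i, hxi⟩
  -- key claim: any difference of two elements of `F i` lies in some `span (D j)`
  have key : ∀ a ∈ F i, ∀ b ∈ F i,
      a - b ∈ ⋃ j, (Submodule.span ℝ (D j) : Set (Fin n → ℝ)) := by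
    intro a ha b hb
    -- segment points
    set p : ℝ → (Fin n → ℝ) := fun t => t • a + (1 - t) • b with hp
    have hpF : ∀ t : ℝ, 0 ≤ t → t ≤ 1 → p t ∈ F i := by
      intro t ht0 ht1
      have := (hFconv i) ha hb ht0 (by linarith : (0:ℝ) ≤ 1 - t) (by ring)
      simpa [hp, add_comm] using this
    set t : ℕ → ℝ := fun k => 1 / (k + 1) with htdef
    have htmem : ∀ k : ℕ, 0 ≤ t k ∧ t k ≤ 1 := by
      intro k
      constructor
      · positivity
      · rw [htdef]
        rw [div_le_one (by positivity)]
        have : (0:ℝ) ≤ (k:ℝ) := Nat.cast_nonneg k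
        linarith
    have hmem : ∀ k : ℕ, ∃ j : Fin M, p (t k) ∈ D j := by
      intro k
      have : p (t k) ∈ ⋃ j, D j :=
        hsub (Set.mem_iUnion.2 ⟨i, hpF (t k) (htmem k).1 (htmem k).2⟩)
      exact Set.mem_iUnion.1 this
    choose g hg using hmem
    obtain ⟨k₁, k₂, hk, hgk⟩ := Finite.exists_ne_map_eq_of_infinite g
    refine Set.mem_iUnion.2 ⟨g k₁, ?_⟩
    have h1 : p (t k₁) ∈ Submodule.span ℝ (D (g k₁)) :=
      Submodule.subset_span (hg k₁)
    have h2 : p (t k₂) ∈ Submodule.span ℝ (D (g k₁)) := by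
      rw [hgk]; exact Submodule.subset_span (hg k₂)
    have htne : t k₁ ≠ t k₂ := by
      intro h
      apply hk
      have h' : ((k₁:ℝ) + 1)⁻¹ = ((k₂:ℝ) + 1)⁻¹ := by
        simpa [htdef, one_div] using h
      field_simp at h'
      exact_mod_cast add_right_cancel h'.symm
    have hdiff : p (t k₁) - p (t k₂) = (t k₁ - t k₂) • (a - b) := by
      simp only [hp]
      rw [smul_sub, sub_smul]
      module
    have hab : a - b = (t k₁ - t k₂)⁻¹ • (p (t k₁) - p (t k₂)) := by
      rw [hdiff, smul_smul, inv_mul_cancel₀ (sub_ne_zero.2 htne), one_smul]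
    rw [hab]
    exact Submodule.smul_mem _ _ (Submodule.sub_mem _ h1 h2)
  -- case on whether `F i` is empty
  rcases Set.eq_empty_or_nonempty (F i) with hFe | ⟨a, ha⟩
  · rw [hFe] at hxi
    simp only [Submodule.span_empty, Submodule.bot_coe, Set.mem_singleton_iff] at hxi
    rw [hxi]; exact hzero
  · -- the set of differences of `F i` is a submodule containing `F i`
    have h0F : (0 : Fin n → ℝ) ∈ F i := by
      simpa using hFcone i 0 le_rfl a ha
    set S : Submodule ℝ (Fin n → ℝ) :=
      { carrier := {x | ∃ u ∈ F i, ∃ v ∈ F i, x = u - v}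
        add_mem' := by
          rintro x y ⟨u, hu, v, hv, rfl⟩ ⟨w, hw, z, hz, rfl⟩
          have huw : u + w ∈ F i := by
            have hmid : (1/2 : ℝ) • u + (1/2 : ℝ) • w ∈ F i :=
              (hFconv i) hu hw (by norm_num) (by norm_num) (by norm_num)
            have := hFcone i 2 (by norm_num) _ hmid
            simpa [smul_add, smul_smul] using this
          have hvz : v + z ∈ F i := by
            have hmid : (1/2 : ℝ) • v + (1/2 : ℝ) • z ∈ F i :=
              (hFconv i) hv hz (by norm_num) (by norm_num) (by norm_num)
            have := hFcone i 2 (by norm_num) _ hmid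
            simpa [smul_add, smul_smul] using this
          exact ⟨u + w, huw, v + z, hvz, by abel⟩
        zero_mem' := ⟨a, ha, a, ha, by abel⟩
        smul_mem' := by
          rintro c x ⟨u, hu, v, hv, rfl⟩
          rcases le_total 0 c with hc | hc
          · exact ⟨c • u, hFcone i c hc u hu, c • v, hFcone i c hc v hv, by
              rw [smul_sub]⟩
          · refine ⟨(-c) • v, hFcone i (-c) (by linarith) v hv,
              (-c) • u, hFcone i (-c) (by linarith) u hu, ?_⟩
            rw [smul_sub]
            module }
    have hFS : F i ⊆ (S : Set (Fin n → ℝ)) := by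
      intro u hu
      exact ⟨u, hu, 0, h0F, by abel⟩
    have hspan : Submodule.span ℝ (F i) ≤ S := Submodule.span_le.2 hFS
    obtain ⟨u, hu, v, hv, rfl⟩ := hspan hxi
    exact key u hu v hv

/-- uniqueness of the piecewise linear expansion `Δ`.  If a set
`C ⊆ ℝ^n` admits two finite decompositions into convex cones (convex sets closed
under multiplication by nonnegative scalars), `C = ∪_{i=1}^N F_i = ∪_{j=1}^M D_j`,
then the unions of the linear hulls agree:
`∪_i span(F_i) = ∪_j span(D_j)`. -/
theorem piecewise_linear_expansion_well_defined (n N M : ℕ) (hN : 0 < N) (hM : 0 < M)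
    (F : Fin N → Set (Fin n → ℝ)) (D : Fin M → Set (Fin n → ℝ))
    (hFconv : ∀ i, Convex ℝ (F i))
    (hFcone : ∀ i, ∀ c : ℝ, 0 ≤ c → ∀ x ∈ F i, c • x ∈ F i)
    (hDconv : ∀ j, Convex ℝ (D j))
    (hDcone : ∀ j, ∀ c : ℝ, 0 ≤ c → ∀ x ∈ D j, c • x ∈ D j)
    (hFD : (⋃ i, F i) = ⋃ j, D j) :
    (⋃ i, (Submodule.span ℝ (F i) : Set (Fin n → ℝ)))
      = ⋃ j, (Submodule.span ℝ (D j) : Set (Fin n → ℝ)) := by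
  apply Set.Subset.antisymm
  · exact union_span_subset_aux hM F D hFconv hFcone hFD.le
  · exact union_span_subset_aux hN D F hDconv hDcone hFD.ge
end

section
/- Let 2 ≤ m ≤ n be integers, let U ∈ ℂ^{n×n} be unitary with rows U_1,…,U_n, let θ_1,…,θ_n be i.i.d. Bernoulli(m/n) random variables, and set A_θ := √(n/m)·diag(θ_1,…,θ_n)·U. Let ξ ∈ ℂ^n be a fixed vector with ‖ξ‖₂ = 1 and set R := n·‖Uξ‖_∞². Then for every t with max(1, R) < t < n/m, ℙ{ |‖A_θ ξ‖₂² − 1| ≥ t } ≤ exp( −m·( (t/R)·log(t/R) − t/R + 1 ) ). -/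
open MeasureTheory ProbabilityTheory
open scoped ENNReal Matrix

/-- The subsampled isometry realized as the `n×n` random matrix
`A_θ := √(n/m)·diag(θ)·U`, which has the same action (in ℓ² norm) as the matrix
obtained by keeping the rows of `√(n/m)·U` indexed by `{j : θ_j = 1}`. -/
noncomputable def subIso {n : ℕ} (m : ℕ) (U : Matrix (Fin n) (Fin n) ℂ) (θ : Fin n → Bool) :
    Matrix (Fin n) (Fin n) ℂ :=
  (Real.sqrt ((n : ℝ) / m) : ℂ) • (Matrix.diagonal (fun i => if θ i then (1 : ℂ) else 0) * U)

section ChernoffAux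

lemma auxA {R t : ℝ} (hR : 1 ≤ R) (ht : R < t) :
    t * Real.log (t / R) + R ≤ (1 + t) * Real.log (1 + t) := by
  have hR0 : (0:ℝ) < R := lt_of_lt_of_le one_pos hR
  have ht1 : (1:ℝ) < t := lt_of_le_of_lt hR ht
  have ht0 : (0:ℝ) < t := lt_trans one_pos ht1
  have h1t : (0:ℝ) < 1 + t := by linarith
  -- log R ≥ 1 - 1/R
  have hlogR : 1 - 1/R ≤ Real.log R := by
    have := Real.log_le_sub_one_of_pos (x := 1/R) (by positivity)
    rw [Real.log_div one_ne_zero hR0.ne'] at this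
    simp only [Real.log_one, zero_sub, one_div] at this ⊢
    linarith
  have hlogR0 : 0 ≤ Real.log R := Real.log_nonneg hR
  have h2 : t * Real.log R ≥ R - 1 := by
    have : R * Real.log R ≥ R - 1 := by
      have h := mul_le_mul_of_nonneg_left hlogR (le_of_lt hR0)
      have hRinv : R * (1/R) = 1 := mul_one_div_cancel hR0.ne'
      nlinarith
    nlinarith [mul_le_mul_of_nonneg_right (le_of_lt ht) hlogR0]
  have hsplit : t * Real.log (t / R) = t * Real.log t - t * Real.log R := by
    rw [Real.log_div ht0.ne' hR0.ne']; ring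
  have hstep1 : t * Real.log (t / R) + R ≤ t * Real.log t + 1 := by
    rw [hsplit]; linarith
  -- (1+t) log(1+t) ≥ t log t + 1
  have hfrac : Real.log (1 + t) - Real.log t ≥ 1 / (1 + t) := by
    have h := Real.log_le_sub_one_of_pos (x := t / (1 + t)) (by positivity)
    rw [Real.log_div ht0.ne' h1t.ne'] at h
    have : t / (1 + t) - 1 = -(1 / (1 + t)) := by field_simp; ring
    rw [this] at h
    linarith
  have hlog2 : (1/2 : ℝ) ≤ Real.log 2 := by linarith [Real.log_two_gt_d9]
  have hlog1t : Real.log 2 ≤ Real.log (1 + t) := Real.log_le_log (by norm_num) (by linarith)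
  have hfrac2 : (1/2 : ℝ) ≤ t / (1 + t) := by
    rw [le_div_iff₀ h1t]; linarith
  have hstep2 : t * Real.log t + 1 ≤ (1 + t) * Real.log (1 + t) := by
    have h3 : t * Real.log (1 + t) ≥ t * Real.log t + t / (1 + t) := by
      have h := mul_le_mul_of_nonneg_left hfrac (le_of_lt ht0)
      have : t * (1/(1+t)) = t / (1+t) := by ring
      nlinarith
    nlinarith [hlog2, hlog1t, hfrac2]
  linarith

lemma auxB {q x t : ℝ} (hq0 : 0 ≤ q) (hq1 : q ≤ 1) (hx0 : 0 ≤ x) (hx1 : x ≤ 1) (ht : 0 < t) :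
    q * Real.exp (Real.log (1 + t) * x) + (1 - q) ≤ Real.exp (q * x * t) := by
  have h1t : (0:ℝ) < 1 + t := by linarith
  have h1 : Real.exp (Real.log (1 + t) * x) = (1 + t) ^ x := by
    rw [Real.rpow_def_of_pos h1t]
  have h2 : (1 + t : ℝ) ^ x ≤ 1 + x * t := by
    have := rpow_one_add_le_one_add_mul_self (s := t) (by linarith) hx0 hx1
    linarith [this]
  have h3 : q * Real.exp (Real.log (1 + t) * x) + (1 - q) ≤ 1 + q * x * t := by
    rw [h1]
    nlinarith
  have h4 := Real.add_one_le_exp (q * x * t)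
  linarith

lemma auxC {m R t : ℝ} (hm : 0 < m) (hR0 : 0 < R)
    (key : t * Real.log (t / R) + R ≤ (1 + t) * Real.log (1 + t)) :
    m * t / R - m / R * ((1 + t) * Real.log (1 + t)) ≤
      -(m * (t / R * Real.log (t / R) - t / R + 1)) := by
  have e1 : m * t / R - m / R * ((1 + t) * Real.log (1 + t))
      = (m / R) * (t - (1 + t) * Real.log (1 + t)) := by ring
  have e2 : -(m * (t / R * Real.log (t / R) - t / R + 1))
      = (m / R) * (t - t * Real.log (t / R) - R) := by field_simp; ring
  rw [e1, e2]
  exact mul_le_mul_of_nonneg_left (by linarith) (div_pos hm hR0).le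


lemma chernoff_aux (m n : ℕ) (hm0 : 0 < m) (hmn : m ≤ n)
    (hple : ((m : NNReal)) / n ≤ 1)
    (a : Fin n → ℝ) (ha0 : ∀ i, 0 ≤ a i) (hsuma : ∑ i, a i = 1)
    (R t : ℝ) (hainf : ∀ i, (n : ℝ) * a i ≤ R)
    (hR1 : 1 ≤ R) (htR : R < t) (ht1 : 1 < t) :
    Measure.pi (fun _ : Fin n => (PMF.bernoulli ((m : NNReal) / n) hple).toMeasure)
      {b | 1 + t ≤ ∑ i, (if b i then ((n : ℝ) / m) * a i else 0)} ≤
    ENNReal.ofReal (Real.exp (-((m : ℝ) * (t / R * Real.log (t / R) - t / R + 1)))) := by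
  have hn0 : 0 < n := lt_of_lt_of_le hm0 hmn
  have hnR : (0 : ℝ) < n := by exact_mod_cast hn0
  have hmR : (0 : ℝ) < m := by exact_mod_cast hm0
  have hmn' : (m : ℝ) ≤ n := by exact_mod_cast hmn
  have hR0 : (0 : ℝ) < R := lt_of_lt_of_le one_pos hR1
  have ht0 : (0 : ℝ) < t := lt_trans one_pos ht1
  set ν := (PMF.bernoulli ((m : NNReal) / n) hple).toMeasure with hν
  set S : (Fin n → Bool) → ℝ := fun b => ∑ i, (if b i then ((n : ℝ) / m) * a i else 0)
    with hSdef
  set w : Bool → ℝ := fun x => cond x ((m : ℝ) / n) (1 - (m : ℝ) / n) with hwdef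
  have hw0 : ∀ x, 0 ≤ w x := by
    intro x; cases x
    · simp only [w, Bool.cond_false]
      have : (m : ℝ) / n ≤ 1 := by rw [div_le_one hnR]; exact hmn'
      linarith
    · simp only [w, Bool.cond_true]; positivity
  have hpOf : ((m : ℝ≥0∞) / n) = ENNReal.ofReal ((m : ℝ) / n) := by
    rw [ENNReal.ofReal_div_of_pos hnR, ENNReal.ofReal_natCast, ENNReal.ofReal_natCast]
  have hνsing : ∀ x : Bool, ν {x} = ENNReal.ofReal (w x) := by
    intro x
    rw [hν, PMF.toMeasure_apply_singleton _ x (measurableSet_singleton x),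
      PMF.bernoulli_apply]
    cases x
    · show ((1 - (m : NNReal) / n : NNReal) : ℝ≥0∞) = ENNReal.ofReal (1 - (m : ℝ) / n)
      rw [← ENNReal.ofReal_coe_nnreal, NNReal.coe_sub hple, NNReal.coe_div, NNReal.coe_one,
        NNReal.coe_natCast, NNReal.coe_natCast]
    · show (((m : NNReal) / n : NNReal) : ℝ≥0∞) = ENNReal.ofReal ((m : ℝ) / n)
      rw [← ENNReal.ofReal_coe_nnreal, NNReal.coe_div, NNReal.coe_natCast, NNReal.coe_natCast]
  set W : (Fin n → Bool) → ℝ := fun b => ∏ i, w (b i) with hWdef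
  have hW0 : ∀ b, 0 ≤ W b := fun b => Finset.prod_nonneg fun i _ => hw0 (b i)
  have hsingle : ∀ b : Fin n → Bool,
      Measure.pi (fun _ : Fin n => ν) {b} = ENNReal.ofReal (W b) := by
    intro b
    rw [← Set.univ_pi_singleton, Measure.pi_pi]
    show ∏ i, ν {b i} = ENNReal.ofReal (∏ i, w (b i))
    calc ∏ i, ν {b i} = ∏ i, ENNReal.ofReal (w (b i)) :=
          Finset.prod_congr rfl fun i _ => hνsing (b i)
      _ = ENNReal.ofReal (∏ i, w (b i)) :=
          (ENNReal.ofReal_prod_of_nonneg fun i _ => hw0 (b i)).symm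
  set F : Finset (Fin n → Bool) := Finset.univ.filter (fun b => 1 + t ≤ S b) with hFdef
  have hunion : {b : Fin n → Bool | 1 + t ≤ S b} = ⋃ b ∈ F, {b} := by
    ext b; simp [hFdef]
  -- the real Chernoff bound
  set lam : ℝ := (m : ℝ) / R * Real.log (1 + t) with hlam
  have hlam0 : 0 ≤ lam := by
    apply mul_nonneg (div_pos hmR hR0).le (Real.log_nonneg (by linarith))
  have hreal : ∑ b ∈ F, W b ≤
      Real.exp (-((m : ℝ) * (t / R * Real.log (t / R) - t / R + 1))) := by
    have step1 : ∑ b ∈ F, W b ≤ ∑ b ∈ F, Real.exp (lam * (S b - (1 + t))) * W b := by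
      refine Finset.sum_le_sum fun b hb => ?_
      have hbS : 1 + t ≤ S b := by
        simpa [hFdef] using hb
      have h1 : (1 : ℝ) ≤ Real.exp (lam * (S b - (1 + t))) :=
        Real.one_le_exp (mul_nonneg hlam0 (by linarith))
      exact (le_mul_of_one_le_left (hW0 b) h1)
    have step2 : ∑ b ∈ F, Real.exp (lam * (S b - (1 + t))) * W b ≤
        ∑ b : Fin n → Bool, Real.exp (lam * (S b - (1 + t))) * W b := by
      refine Finset.sum_le_sum_of_subset_of_nonneg (Finset.subset_univ F) fun b _ _ =>
        mul_nonneg (Real.exp_pos _).le (hW0 b)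
    have step3 : ∑ b : Fin n → Bool, Real.exp (lam * (S b - (1 + t))) * W b =
        Real.exp (-(lam * (1 + t))) *
          ∏ i, ∑ x : Bool, w x * Real.exp (lam * (if x then ((n : ℝ) / m) * a i else 0)) := by
      rw [Fintype.prod_sum (fun i x => w x * Real.exp (lam * (if x then ((n : ℝ)/m) * a i else 0)))]
      rw [Finset.mul_sum]
      refine Finset.sum_congr rfl fun b _ => ?_
      have e1 : Real.exp (lam * (S b - (1 + t))) =
          Real.exp (-(lam * (1 + t))) * Real.exp (lam * S b) := by
        rw [← Real.exp_add]; ring_nf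
      have e2 : Real.exp (lam * S b) =
          ∏ i, Real.exp (lam * (if b i then ((n : ℝ) / m) * a i else 0)) := by
        rw [← Real.exp_sum, hSdef, Finset.mul_sum]
      rw [e1, e2, hWdef, mul_assoc, ← Finset.prod_mul_distrib]
      congr 1
      exact Finset.prod_congr rfl fun i _ => mul_comm _ _
    have step4 : ∀ i, ∑ x : Bool, w x * Real.exp (lam * (if x then ((n : ℝ) / m) * a i else 0))
        ≤ Real.exp ((m : ℝ) * t * a i / R) := by
      intro i
      rw [Fintype.sum_bool]
      simp only [w, Bool.cond_true, Bool.cond_false, show (false = true) = False from by simp,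
        show (true = true) = True from by simp, if_true, if_false, mul_zero, Real.exp_zero,
        mul_one]
      have hx0 : 0 ≤ (n : ℝ) * a i / R :=
        div_nonneg (mul_nonneg hnR.le (ha0 i)) hR0.le
      have hx1 : (n : ℝ) * a i / R ≤ 1 := by
        rw [div_le_one hR0]; exact hainf i
      have hq0 : 0 ≤ (m : ℝ) / n := by positivity
      have hq1 : (m : ℝ) / n ≤ 1 := by rw [div_le_one hnR]; exact hmn'
      have harg : lam * (((n : ℝ) / m) * a i) = Real.log (1 + t) * ((n : ℝ) * a i / R) := by
        rw [hlam]; field_simp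
      have hres : (m : ℝ) / n * ((n : ℝ) * a i / R) * t = (m : ℝ) * t * a i / R := by
        field_simp
      calc (m : ℝ) / n * Real.exp (lam * (((n : ℝ) / m) * a i)) + (1 - (m : ℝ) / n)
          = (m : ℝ) / n * Real.exp (Real.log (1 + t) * ((n : ℝ) * a i / R)) + (1 - (m : ℝ) / n) := by
            rw [harg]
        _ ≤ Real.exp ((m : ℝ) / n * ((n : ℝ) * a i / R) * t) := auxB hq0 hq1 hx0 hx1 ht0
        _ = Real.exp ((m : ℝ) * t * a i / R) := by rw [hres]
    have step5 : ∏ i, ∑ x : Bool, w x * Real.exp (lam * (if x then ((n : ℝ) / m) * a i else 0))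
        ≤ Real.exp ((m : ℝ) * t / R) := by
      calc ∏ i, ∑ x : Bool, w x * Real.exp (lam * (if x then ((n : ℝ) / m) * a i else 0))
          ≤ ∏ i, Real.exp ((m : ℝ) * t * a i / R) := by
            refine Finset.prod_le_prod (fun i _ => ?_) (fun i _ => step4 i)
            exact Finset.sum_nonneg fun x _ => mul_nonneg (hw0 x) (Real.exp_pos _).le
        _ = Real.exp (∑ i, (m : ℝ) * t * a i / R) := by rw [← Real.exp_sum]
        _ = Real.exp ((m : ℝ) * t / R) := by
            congr 1
            rw [← Finset.sum_div, ← Finset.mul_sum, hsuma, mul_one]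
    calc ∑ b ∈ F, W b ≤ ∑ b : Fin n → Bool, Real.exp (lam * (S b - (1 + t))) * W b :=
          le_trans step1 step2
      _ = Real.exp (-(lam * (1 + t))) *
          ∏ i, ∑ x : Bool, w x * Real.exp (lam * (if x then ((n : ℝ) / m) * a i else 0)) := step3
      _ ≤ Real.exp (-(lam * (1 + t))) * Real.exp ((m : ℝ) * t / R) := by
          exact mul_le_mul_of_nonneg_left step5 (Real.exp_pos _).le
      _ = Real.exp ((m : ℝ) * t / R - (m : ℝ) / R * ((1 + t) * Real.log (1 + t))) := by
          rw [← Real.exp_add]; congr 1; rw [hlam]; ring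
      _ ≤ Real.exp (-((m : ℝ) * (t / R * Real.log (t / R) - t / R + 1))) := by
          exact Real.exp_le_exp.mpr (auxC hmR hR0 (auxA hR1 htR))
  calc Measure.pi (fun _ : Fin n => ν) {b | 1 + t ≤ S b}
      = Measure.pi (fun _ : Fin n => ν) (⋃ b ∈ F, {b}) := by rw [hunion]
    _ ≤ ∑ b ∈ F, Measure.pi (fun _ : Fin n => ν) {b} := measure_biUnion_finset_le F _
    _ = ∑ b ∈ F, ENNReal.ofReal (W b) := Finset.sum_congr rfl fun b _ => hsingle b
    _ = ENNReal.ofReal (∑ b ∈ F, W b) := (ENNReal.ofReal_sum_of_nonneg fun b _ => hW0 b).symm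
    _ ≤ _ := ENNReal.ofReal_le_ofReal hreal

end ChernoffAux

/-- `flattish vector' concentration.  For a unit vector `ξ ∈ ℂ^n`,
with `R := n·‖Uξ‖_∞²`, and any `max(1,R) < t < n/m`,
`ℙ{ |‖A_θ ξ‖₂² − 1| ≥ t } ≤ exp(−m·((t/R)·log(t/R) − t/R + 1))`. -/

theorem flattish_vector_concentration (m n : ℕ) (hm : 2 ≤ m) (hmn : m ≤ n)
    (U : Matrix (Fin n) (Fin n) ℂ) (hU : Uᴴ * U = 1)
    (Ω : Type) [MeasurableSpace Ω] (μ : Measure Ω) [IsProbabilityMeasure μ]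
    (θ : Ω → Fin n → Bool) (hθmeas : Measurable θ)
    (hθ : Measure.map θ μ = Measure.pi (fun _ : Fin n =>
      (PMF.bernoulli ((m : NNReal) / n)
        (div_le_one_of_le₀ (by exact_mod_cast hmn) (by positivity))).toMeasure))
    (ξ : Fin n → ℂ) (hξ : l2C ξ = 1)
    (R : ℝ) (hR : R = n * linfC (U.mulVec ξ) ^ 2)
    (t : ℝ) (ht1 : max 1 R < t) (ht2 : t < (n : ℝ) / m) :
    μ {ω | t ≤ |l2C ((subIso m U (θ ω)).mulVec ξ) ^ 2 - 1|} ≤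
      ENNReal.ofReal (Real.exp (-((m : ℝ) * (t / R * Real.log (t / R) - t / R + 1)))) := by
  have hm0 : 0 < m := lt_of_lt_of_le two_pos hm
  have hn0 : 0 < n := lt_of_lt_of_le hm0 hmn
  have hnR : (0 : ℝ) < n := by exact_mod_cast hn0
  have hmR : (0 : ℝ) < m := by exact_mod_cast hm0
  have ht1' : 1 < t := lt_of_le_of_lt (le_max_left 1 R) ht1
  have htR : R < t := lt_of_le_of_lt (le_max_right 1 R) ht1
  set v := U.mulVec ξ with hv
  set a : Fin n → ℝ := fun i => ‖v i‖ ^ 2 with hadef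
  have ha0 : ∀ i, 0 ≤ a i := fun i => by positivity
  have hdot : ∀ (y : Fin n → ℂ), star y ⬝ᵥ y = ((∑ i, ‖y i‖ ^ 2 : ℝ) : ℂ) := by
    intro y
    rw [dotProduct]
    push_cast
    refine Finset.sum_congr rfl fun i _ => ?_
    rw [Pi.star_apply, Complex.star_def, mul_comm, Complex.mul_conj, Complex.normSq_eq_norm_sq]
    push_cast
    ring
  have hξsum : ∑ i, ‖ξ i‖ ^ 2 = 1 := by
    have := hξ
    unfold l2C at this
    exact Real.sqrt_eq_one.mp this
  have hsuma : ∑ i, a i = 1 := by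
    have h1 : star v ⬝ᵥ v = star ξ ⬝ᵥ ξ := by
      rw [hv, Matrix.star_mulVec, Matrix.dotProduct_mulVec, Matrix.vecMul_vecMul, hU,
        Matrix.vecMul_one]
    rw [hdot v, hdot ξ, hξsum] at h1
    exact_mod_cast h1
  have hlinf : ∀ i, ‖v i‖ ≤ linfC v := by
    intro i
    unfold linfC
    exact le_ciSup (f := fun j => ‖v j‖) (Set.Finite.bddAbove (Set.finite_range _)) i
  have hlinf0 : 0 ≤ linfC v := le_trans (norm_nonneg _) (hlinf ⟨0, hn0⟩)
  have hainf : ∀ i, (n : ℝ) * a i ≤ R := by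
    intro i
    rw [hR]
    exact mul_le_mul_of_nonneg_left (pow_le_pow_left₀ (norm_nonneg _) (hlinf i) 2) hnR.le
  have hR1 : 1 ≤ R := by
    calc (1 : ℝ) = ∑ i, a i := hsuma.symm
      _ ≤ ∑ _i : Fin n, linfC v ^ 2 :=
          Finset.sum_le_sum fun i _ => pow_le_pow_left₀ (norm_nonneg _) (hlinf i) 2
      _ = n * linfC v ^ 2 := by
          rw [Finset.sum_const, Finset.card_univ, Fintype.card_fin, nsmul_eq_mul]
      _ = R := hR.symm
  -- compute the squared norm
  have hSeq : ∀ b : Fin n → Bool, l2C ((subIso m U b).mulVec ξ) ^ 2 =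
      ∑ i, (if b i then ((n : ℝ) / m) * a i else 0) := by
    intro b
    have hvec : (subIso m U b).mulVec ξ = fun i =>
        ((Real.sqrt ((n : ℝ) / m) : ℝ) : ℂ) * ((if b i then (1 : ℂ) else 0) * v i) := by
      rw [subIso, Matrix.smul_mulVec, ← Matrix.mulVec_mulVec, ← hv]
      funext i
      rw [Pi.smul_apply, Matrix.mulVec_diagonal, smul_eq_mul]
    rw [hvec]
    unfold l2C
    rw [Real.sq_sqrt (Finset.sum_nonneg fun i _ => by positivity)]
    refine Finset.sum_congr rfl fun i _ => ?_
    by_cases hbi : b i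
    · simp only [hbi, if_true]
      rw [norm_mul, norm_mul, Complex.norm_real, Real.norm_eq_abs, norm_one,
        abs_of_nonneg (Real.sqrt_nonneg _)]
      rw [mul_pow, mul_pow, Real.sq_sqrt (div_nonneg hnR.le hmR.le)]
      ring
    · simp [hbi]
  -- rewrite the event and map
  have hSeqset : {ω | t ≤ |l2C ((subIso m U (θ ω)).mulVec ξ) ^ 2 - 1|} =
      θ ⁻¹' {b | t ≤ |(∑ i, (if b i then ((n : ℝ) / m) * a i else 0)) - 1|} := by
    ext ω
    simp only [Set.mem_setOf_eq, Set.mem_preimage, hSeq]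
  have hEmeas : MeasurableSet
      {b : Fin n → Bool | t ≤ |(∑ i, (if b i then ((n : ℝ) / m) * a i else 0)) - 1|} :=
    Set.Finite.measurableSet (Set.toFinite _)
  rw [hSeqset, ← Measure.map_apply hθmeas hEmeas, hθ]
  refine le_trans (measure_mono ?_)
    (chernoff_aux m n hm0 hmn _ a ha0 hsuma R t hainf hR1 htR ht1')
  intro b hb
  simp only [Set.mem_setOf_eq] at hb ⊢
  have hS0 : 0 ≤ ∑ i, (if b i then ((n : ℝ) / m) * a i else 0) := by
    refine Finset.sum_nonneg fun i _ => ?_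
    by_cases hbi : b i
    · simp only [hbi, if_true]
      positivity
    · simp [hbi]
  rcases le_abs.mp hb with h | h
  · linarith
  · linarith
end

section
/- Let 0 < p < 1 and t > 1 satisfy t·p < 1, and define h_p(a) := (1−a)·log((1−a)/(1−p)) + a·log(a/p) for 0 < a < 1. Then h_p(t·p) ≥ p·( t·log t − t + 1 ). -/
/-- The Kullback–Leibler divergence `h_p(a)` between Bernoulli(a) and
Bernoulli(p), evaluated at `a = t·p`, is bounded below by `p·(t·log t − t + 1)`
whenever `0 < p < 1`, `t > 1` and `t·p < 1`. -/
theorem kl_bernoulli_lower_bound (p t : ℝ) (hp0 : 0 < p) (hp1 : p < 1)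
    (ht : 1 < t) (htp : t * p < 1) :
    p * (t * Real.log t - t + 1) ≤
      (1 - t * p) * Real.log ((1 - t * p) / (1 - p)) + (t * p) * Real.log ((t * p) / p) := by
  have hA : (0:ℝ) < 1 - t * p := by linarith
  have hB : (0:ℝ) < 1 - p := by linarith
  have hlog : Real.log ((1-p)/(1-t*p)) ≤ (1-p)/(1-t*p) - 1 :=
    Real.log_le_sub_one_of_pos (by positivity)
  have h1 : 1 - (1-p)/(1-t*p) ≤ Real.log ((1-t*p)/(1-p)) := by
    rw [Real.log_div hA.ne' hB.ne']
    rw [Real.log_div hB.ne' hA.ne'] at hlog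
    linarith
  have h2 : (t*p)/p = t := by field_simp
  rw [h2]
  have key : (1-t*p) * (1 - (1-p)/(1-t*p)) = (1-t*p) - (1-p) := by field_simp
  have h3 : (1-t*p) - (1-p) ≤ (1-t*p) * Real.log ((1-t*p)/(1-p)) := by
    have := mul_le_mul_of_nonneg_left h1 hA.le
    linarith [key ▸ this]
  nlinarith [h3]
end
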